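/- arXiv:2504.13911 — 5 statements merged into one kernel-verified Lean document; each statement's English description precedes it below -/
import Mathlib

section
/- Under the root-subgroup data and Levi data hypotheses, one has (V⁻N) ∩ Q = L ∩ N; that is, if an element of Q can be written v⁻n with v⁻ ∈ V⁻ and n ∈ N, then v⁻ = 1 and n ∈ L ∩ N, and conversely every element of L ∩ N lies in (V⁻N) ∩ Q. (Abstract form of the paper's Lemma 'a lemma for Bruhat decomposition'.) -/
open Pointwise

section AxiomaticFramework

variable {G : Type*} [Group G] {ι : Type*}

/-- The subgroup generated by the root subgroups `U α` for `α ∈ s`. -/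
def genU (U : ι → Subgroup G) (s : Finset ι) : Subgroup G := ⨆ α ∈ s, U α

/-- The multiplication map attached to an enumeration `l` of a set of roots is a
bijection from `∏ (K ∩ U α)` onto `K ∩ T`. -/
def ProdBij (U : ι → Subgroup G) (K T : Subgroup G) (l : List ι) : Prop :=
  Function.Injective
    (fun x : ∀ i : Fin l.length, ↥(K ⊓ U (l.get i)) =>
      (List.ofFn fun i => ((x i : G))).prod) ∧
  Set.range
    (fun x : ∀ i : Fin l.length, ↥(K ⊓ U (l.get i)) =>
      (List.ofFn fun i => ((x i : G))).prod)
    = ((K ⊓ T : Subgroup G) : Set G)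

/-- Condition (3.1) for a subgroup `K`, relative to root subgroups `U`,
reduced positive roots `PRp`, reduced negative roots `PRm`, `U⁺ = Up`, `U⁻ = Um`, `N`. -/
def Cond31 (U : ι → Subgroup G) (PRp PRm : Finset ι) (Up Um N K : Subgroup G) : Prop :=
  ((K : Set G) = ↑(K ⊓ Um) * ↑(K ⊓ Up) * ↑(K ⊓ N)) ∧
  ((K : Set G) = ↑(K ⊓ Up) * ↑(K ⊓ Um) * ↑(K ⊓ N)) ∧
  (∀ l : List ι, l.Nodup → (∀ a, a ∈ l ↔ a ∈ PRp) → ProdBij U K Up l) ∧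
  (∀ l : List ι, l.Nodup → (∀ a, a ∈ l ↔ a ∈ PRm) → ProdBij U K Um l)

/-- Condition (3.2) for a subgroup `K`. -/
def Cond32 (Up Um Z K : Subgroup G) : Prop :=
  (K : Set G) = ↑(K ⊓ Up) * ↑(K ⊓ Um) * ↑(K ⊓ Up) * ↑(K ⊓ Z)

/-- Root-subgroup data: a finite set of roots `Phi` with a distinguished subset `PhiRed`
and a partition `Phi = PhiP ⊔ PhiM`, root subgroups `U α`, and subgroups `Z ≤ N`. -/
structure RootData (G : Type*) [Group G] (ι : Type*) [DecidableEq ι] where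
  Phi : Finset ι
  PhiRed : Finset ι
  PhiP : Finset ι
  PhiM : Finset ι
  red_sub : PhiRed ⊆ Phi
  union_eq : PhiP ∪ PhiM = Phi
  disj : Disjoint PhiP PhiM
  U : ι → Subgroup G
  Z : Subgroup G
  N : Subgroup G
  hZN : Z ≤ N

variable [DecidableEq ι]

namespace RootData

variable (D : RootData G ι)

/-- `U⁺`, the subgroup generated by the `U α`, `α ∈ Φ⁺`. -/
def Up : Subgroup G := genU D.U D.PhiP

/-- `U⁻`, the subgroup generated by the `U α`, `α ∈ Φ⁻`. -/
def Um : Subgroup G := genU D.U D.PhiM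

/-- Condition (3.1) with respect to `G`. -/
def cond31 (K : Subgroup G) : Prop :=
  Cond31 D.U (D.PhiRed ∩ D.PhiP) (D.PhiRed ∩ D.PhiM) D.Up D.Um D.N K

/-- Condition (3.2) with respect to `G`. -/
def cond32 (K : Subgroup G) : Prop := Cond32 D.Up D.Um D.Z K

end RootData

/-- Levi data for given root-subgroup data. -/
structure LeviData (D : RootData G ι) where
  PhiJ : Finset ι
  J_sub : PhiJ ⊆ D.Phi
  L : Subgroup G
  Q : Subgroup G
  hZL : D.Z ≤ L
  /-- (i): `U α ≤ L` for `α ∈ Φ_J` -/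
  hUL : ∀ α ∈ PhiJ, D.U α ≤ L
  /-- (i): `U_J⁺ = L ∩ U⁺` is generated by the `U α`, `α ∈ Φ_J⁺` -/
  hUJp : L ⊓ D.Up = genU D.U (PhiJ ∩ D.PhiP)
  /-- (i): `U_J⁻ = L ∩ U⁻` is generated by the `U α`, `α ∈ Φ_J⁻` -/
  hUJm : L ⊓ D.Um = genU D.U (PhiJ ∩ D.PhiM)
  /-- (ii): `L` normalizes `V⁺` -/
  hLnormV : ∀ l ∈ L, ∀ v ∈ genU D.U (D.PhiP \ PhiJ), l * v * l⁻¹ ∈ genU D.U (D.PhiP \ PhiJ)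
  /-- (ii): `V⁺ ∩ L = 1` -/
  hVL : genU D.U (D.PhiP \ PhiJ) ⊓ L = ⊥
  /-- (ii): `Q = V⁺L` -/
  hQ_VL : (Q : Set G) = ↑(genU D.U (D.PhiP \ PhiJ)) * ↑L
  /-- (ii): `Q = LV⁺` -/
  hQ_LV : (Q : Set G) = ↑L * ↑(genU D.U (D.PhiP \ PhiJ))
  /-- (iii): `G = U⁻NU⁺` -/
  bruhat_cover : (↑D.Um * ↑D.N * ↑D.Up : Set G) = Set.univ
  /-- (iii): uniqueness of the `N`-component -/
  bruhat_uniq : ∀ u₁ n₁ v₁ u₂ n₂ v₂ : G, u₁ ∈ D.Um → n₁ ∈ D.N → v₁ ∈ D.Up →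
    u₂ ∈ D.Um → n₂ ∈ D.N → v₂ ∈ D.Up → u₁ * n₁ * v₁ = u₂ * n₂ * v₂ → n₁ = n₂
  /-- (iv): decomposition of `L` -/
  hLdec : (L : Set G) ⊆ ↑(L ⊓ D.Um) * ↑(L ⊓ D.N) * ↑(L ⊓ D.Up)
  /-- (v): `V⁻ ∩ Q = 1` -/
  hVmQ : genU D.U (D.PhiM \ PhiJ) ⊓ Q = ⊥

namespace LeviData

variable {D : RootData G ι} (LD : LeviData D)

/-- `V⁺`, the subgroup generated by the `U α`, `α ∈ Φ⁺ \ Φ_J`. -/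
def Vp : Subgroup G := genU D.U (D.PhiP \ LD.PhiJ)

/-- `V⁻`, the subgroup generated by the `U α`, `α ∈ Φ⁻ \ Φ_J`. -/
def Vm : Subgroup G := genU D.U (D.PhiM \ LD.PhiJ)

/-- Condition (3.1) with respect to the Levi subgroup `L`. -/
def cond31L (K : Subgroup G) : Prop :=
  Cond31 D.U (LD.PhiJ ∩ D.PhiRed ∩ D.PhiP) (LD.PhiJ ∩ D.PhiRed ∩ D.PhiM)
    (LD.L ⊓ D.Up) (LD.L ⊓ D.Um) (D.N ⊓ LD.L) K

/-- Condition (3.2) with respect to the Levi subgroup `L`. -/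
def cond32L (K : Subgroup G) : Prop :=
  Cond32 (LD.L ⊓ D.Up) (LD.L ⊓ D.Um) D.Z K

end LeviData

end AxiomaticFramework

/-- Under the root-subgroup data and Levi data hypotheses,
`(V⁻N) ∩ Q = L ∩ N`: any element of `Q` of the form `v⁻ * n` with `v⁻ ∈ V⁻`, `n ∈ N`
has `v⁻ = 1` and `n ∈ L ∩ N`, and conversely every element of `L ∩ N` lies in
`(V⁻N) ∩ Q`. -/
theorem stmt0 {G : Type*} [Group G] {ι : Type*} [DecidableEq ι]
    (D : RootData G ι) (LD : LeviData D) :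
    (∀ v n : G, v ∈ LD.Vm → n ∈ D.N → v * n ∈ LD.Q → v = 1 ∧ n ∈ LD.L ⊓ D.N) ∧
    ((LD.L ⊓ D.N : Subgroup G) : Set G) ⊆
      ((LD.Vm : Set G) * (D.N : Set G)) ∩ (LD.Q : Set G) := by
  classical
  have genU_mono : ∀ (U : ι → Subgroup G) (s t : Finset ι), s ⊆ t → genU U s ≤ genU U t := by
    intro U s t hst
    exact iSup_le fun α => iSup_le fun hα => le_iSup₂ (f := fun α (_ : α ∈ t) => U α) α (hst hα)
  have hVmUm : LD.Vm ≤ D.Um := genU_mono _ _ _ (Finset.sdiff_subset)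
  have hVpUp : LD.Vp ≤ D.Up := genU_mono _ _ _ (Finset.sdiff_subset)
  have hLQ : LD.L ≤ LD.Q := by
    intro l hl
    have : l ∈ (LD.Q : Set G) := by
      rw [LD.hQ_VL]
      exact ⟨1, Subgroup.one_mem _, l, hl, one_mul l⟩
    exact this
  constructor
  · intro v n hv hn hvnQ
    have hvnQ' : v * n ∈ (LD.L : Set G) * (LD.Vp : Set G) := by
      have := LD.hQ_LV
      exact this ▸ hvnQ
    obtain ⟨l, hl, w, hw, hlw⟩ := hvnQ'
    obtain ⟨ab, hab, c, hc, habc⟩ := LD.hLdec hl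
    obtain ⟨a, ha, b, hb, rfl⟩ := hab
    have ha' : a ∈ LD.L ⊓ D.Um := ha
    have hb' : b ∈ LD.L ⊓ D.N := hb
    have hc' : c ∈ LD.L ⊓ D.Up := hc
    have habc' : a * b * c = l := habc
    have hlw' : l * w = v * n := hlw
    have heq : v * n * 1 = a * b * (c * w) := by
      rw [mul_one, ← mul_assoc, habc', hlw']
    have hnb : n = b := LD.bruhat_uniq v n 1 a b (c * w) (hVmUm hv) hn
      (Subgroup.one_mem _) ha'.2 hb'.2
      (Subgroup.mul_mem _ hc'.2 (hVpUp hw)) heq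
    have hnLN : n ∈ LD.L ⊓ D.N := hnb ▸ hb'
    refine ⟨?_, hnLN⟩
    have hvQ : v ∈ LD.Q := by
      have : v = (v * n) * n⁻¹ := by group
      rw [this]
      exact Subgroup.mul_mem _ hvnQ (Subgroup.inv_mem _ (hLQ hnLN.1))
    have hbot : v ∈ (⊥ : Subgroup G) := LD.hVmQ ▸ (⟨hv, hvQ⟩ : v ∈ LD.Vm ⊓ LD.Q)
    exact hbot
  · intro x hx
    exact ⟨⟨1, Subgroup.one_mem _, x, hx.2, one_mul x⟩, hLQ hx.1⟩
end

section
/- Under the root-subgroup data and Levi data hypotheses, if a subgroup K ≤ G satisfies condition (3.1), then Q ∩ K = (V⁺ ∩ K) ⋊ (L ∩ K); more precisely, V⁺ ∩ K is a normal subgroup of Q ∩ K, (V⁺ ∩ K) ∩ (L ∩ K) = {1}, Q ∩ K = (V⁺ ∩ K)(L ∩ K), and consequently π(Q ∩ K) = L ∩ K. (Abstract form of part (1) of the paper's Proposition following Henniart–Vignéras.) -/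
open Pointwise

namespace Stmt1Aux

variable {G : Type*} [Group G] {ι : Type*}


lemma genU_le {U : ι → Subgroup G} {s : Finset ι} {H : Subgroup G}
    (h : ∀ α ∈ s, U α ≤ H) : genU U s ≤ H := iSup₂_le h

lemma le_genU {U : ι → Subgroup G} {s : Finset ι} {α : ι} (h : α ∈ s) : U α ≤ genU U s :=
  le_iSup₂ (f := fun β (_ : β ∈ s) => U β) α h

lemma mem_mul3 {A B C : Subgroup G} {g : G} (h : g ∈ (↑A * ↑B * ↑C : Set G)) :
    ∃ a ∈ A, ∃ b ∈ B, ∃ c ∈ C, g = a * b * c := by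
  obtain ⟨ab, hab, c, hc, rfl⟩ := Set.mem_mul.1 h
  obtain ⟨a, ha, b, hb, rfl⟩ := Set.mem_mul.1 hab
  exact ⟨a, ha, b, hb, c, hc, rfl⟩

lemma list_prod_split (H₁ H₂ : Subgroup G) (L : List G) (m : ℕ)
    (h₁ : ∀ (i : ℕ) (h : i < L.length), i < m → L[i] ∈ H₁)
    (h₂ : ∀ (i : ℕ) (h : i < L.length), m ≤ i → L[i] ∈ H₂) :
    ∃ p₁ ∈ H₁, ∃ p₂ ∈ H₂, L.prod = p₁ * p₂ := by
  refine ⟨(L.take m).prod, ?_, (L.drop m).prod, ?_,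
    by rw [← List.prod_append, List.take_append_drop]⟩
  · apply Subgroup.list_prod_mem
    intro x hx
    obtain ⟨i, hi, rfl⟩ := List.mem_iff_getElem.1 hx
    have hi' : i < m ∧ i < L.length := by
      simpa [List.length_take, lt_min_iff] using hi
    rw [List.getElem_take]
    exact h₁ i hi'.2 hi'.1
  · apply Subgroup.list_prod_mem
    intro x hx
    obtain ⟨i, hi, rfl⟩ := List.mem_iff_getElem.1 hx
    have hi' : i < L.length - m := by simpa [List.length_drop] using hi
    rw [List.getElem_drop]
    exact h₂ (m + i) (by omega) (by omega)

lemma prodBij_split {U : ι → Subgroup G} {K T : Subgroup G} (H₁ H₂ : Subgroup G)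
    {l₁ l₂ : List ι}
    (h₁ : ∀ a ∈ l₁, K ⊓ U a ≤ H₁) (h₂ : ∀ a ∈ l₂, K ⊓ U a ≤ H₂)
    (hPB : ProdBij U K T (l₁ ++ l₂)) {u : G} (hu : u ∈ K ⊓ T) :
    ∃ p₁ ∈ H₁, ∃ p₂ ∈ H₂, u = p₁ * p₂ := by
  have hr : u ∈ Set.range (fun x : ∀ i : Fin (l₁ ++ l₂).length, ↥(K ⊓ U ((l₁ ++ l₂).get i)) =>
      (List.ofFn fun i => ((x i : G))).prod) := by rw [hPB.2]; exact hu
  obtain ⟨x, hx⟩ := hr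
  have hh₁ : ∀ (i : ℕ) (h : i < (List.ofFn fun i => ((x i : G))).length), i < l₁.length →
      (List.ofFn fun i => ((x i : G)))[i] ∈ H₁ := by
    intro i h hi
    have hlen : i < (l₁ ++ l₂).length := by simpa using h
    rw [List.getElem_ofFn]
    have e : (l₁ ++ l₂).get ⟨i, hlen⟩ = l₁[i] := by
      simp [List.get_eq_getElem, List.getElem_append_left hi]
    have hmem : ((x ⟨i, hlen⟩ : G)) ∈ K ⊓ U (l₁[i]) := by
      rw [← e]; exact (x ⟨i, hlen⟩).2
    exact h₁ _ (List.getElem_mem _) hmem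
  have hh₂ : ∀ (i : ℕ) (h : i < (List.ofFn fun i => ((x i : G))).length), l₁.length ≤ i →
      (List.ofFn fun i => ((x i : G)))[i] ∈ H₂ := by
    intro i h hi
    have hlen : i < (l₁ ++ l₂).length := by simpa using h
    rw [List.getElem_ofFn]
    have hlt : i - l₁.length < l₂.length := by
      simp only [List.length_append] at hlen; omega
    have e : (l₁ ++ l₂).get ⟨i, hlen⟩ = l₂[i - l₁.length]'hlt := by
      simp [List.get_eq_getElem, List.getElem_append_right hi]
    have hmem : ((x ⟨i, hlen⟩ : G)) ∈ K ⊓ U (l₂[i - l₁.length]'hlt) := by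
      rw [← e]; exact (x ⟨i, hlen⟩).2
    exact h₂ _ (List.getElem_mem _) hmem
  obtain ⟨p₁, hp₁, p₂, hp₂, hprod⟩ :=
    list_prod_split H₁ H₂ (List.ofFn fun i => ((x i : G))) l₁.length hh₁ hh₂
  exact ⟨p₁, hp₁, p₂, hp₂, by rw [← hx]; exact hprod⟩

end Stmt1Aux

/-- If `K ≤ G` satisfies condition (3.1), then
`Q ∩ K = (V⁺ ∩ K) ⋊ (L ∩ K)`: `V⁺ ∩ K` is normal in `Q ∩ K`, the two factors intersect
trivially, `Q ∩ K = (V⁺ ∩ K)(L ∩ K)`, and consequently `π(Q ∩ K) = L ∩ K` where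
`π : Q = V⁺ ⋊ L → L` is the projection. -/
theorem stmt1 {G : Type*} [Group G] {ι : Type*} [DecidableEq ι]
    (D : RootData G ι) (LD : LeviData D) (K : Subgroup G) (hK : D.cond31 K) :
    (∀ q ∈ LD.Q ⊓ K, ∀ v ∈ LD.Vp ⊓ K, q * v * q⁻¹ ∈ LD.Vp ⊓ K) ∧
    (LD.Vp ⊓ K) ⊓ (LD.L ⊓ K) = ⊥ ∧
    ((LD.Q ⊓ K : Subgroup G) : Set G) =
      ((LD.Vp ⊓ K : Subgroup G) : Set G) * ((LD.L ⊓ K : Subgroup G) : Set G) ∧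
    {l : G | l ∈ LD.L ∧ ∃ v ∈ LD.Vp, v * l ∈ K} = ((LD.L ⊓ K : Subgroup G) : Set G) := by
  classical
  open Stmt1Aux in
  obtain ⟨h1, h2, h3, h4⟩ := hK
  -- basic inclusions
  have hVQ : LD.Vp ≤ LD.Q := by
    intro v hv
    have : v ∈ (LD.Q : Set G) := by
      rw [LD.hQ_VL]; exact Set.mem_mul.2 ⟨v, hv, 1, one_mem _, mul_one v⟩
    exact this
  have hLQ : LD.L ≤ LD.Q := by
    intro l hl
    have : l ∈ (LD.Q : Set G) := by
      rw [LD.hQ_LV]; exact Set.mem_mul.2 ⟨l, hl, 1, one_mem _, mul_one l⟩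
    exact this
  have hVmUm : LD.Vm ≤ D.Um :=
    genU_le fun α hα => le_genU (Finset.mem_sdiff.1 hα).1
  have hVpUp : LD.Vp ≤ D.Up :=
    genU_le fun α hα => le_genU (Finset.mem_sdiff.1 hα).1
  -- the key decomposition
  have key : ∀ q ∈ LD.Q ⊓ K, ∃ v ∈ LD.Vp ⊓ K, ∃ l ∈ LD.L ⊓ K, q = v * l := by
    intro q hq
    obtain ⟨hqQ, hqK⟩ := Subgroup.mem_inf.1 hq
    have hqK' : q ∈ (↑(K ⊓ D.Up) * ↑(K ⊓ D.Um) * ↑(K ⊓ D.N) : Set G) := by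
      rw [← h2]; exact hqK
    obtain ⟨up, hup, um, hum, n, hn, hq_eq⟩ := mem_mul3 hqK'
    obtain ⟨hnK, hnN⟩ := Subgroup.mem_inf.1 hn
    -- split up into V⁺-part and L-part
    have hup_split : ∃ v ∈ LD.Vp ⊓ K, ∃ a ∈ LD.L ⊓ K, up = v * a := by
      refine prodBij_split (U := D.U) (LD.Vp ⊓ K) (LD.L ⊓ K)
        (l₁ := ((D.PhiRed ∩ D.PhiP) \ LD.PhiJ).toList)
        (l₂ := (D.PhiRed ∩ D.PhiP ∩ LD.PhiJ).toList) ?_ ?_ ?_ hup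
      · intro a ha
        rw [Finset.mem_toList, Finset.mem_sdiff, Finset.mem_inter] at ha
        exact le_inf (inf_le_right.trans
          (le_genU (Finset.mem_sdiff.2 ⟨ha.1.2, ha.2⟩))) inf_le_left
      · intro a ha
        rw [Finset.mem_toList, Finset.mem_inter] at ha
        exact le_inf (inf_le_right.trans (LD.hUL a ha.2)) inf_le_left
      · refine h3 _ (List.Nodup.append (Finset.nodup_toList _) (Finset.nodup_toList _) ?_) ?_
        · intro a ha hb
          rw [Finset.mem_toList, Finset.mem_sdiff] at ha
          rw [Finset.mem_toList, Finset.mem_inter] at hb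
          exact ha.2 hb.2
        · intro a
          simp only [List.mem_append, Finset.mem_toList, Finset.mem_sdiff, Finset.mem_inter]
          by_cases hJ : a ∈ LD.PhiJ <;> tauto
    -- split um into L-part and V⁻-part
    have hum_split : ∃ w ∈ LD.L ⊓ K, ∃ vm ∈ LD.Vm ⊓ K, um = w * vm := by
      refine prodBij_split (U := D.U) (LD.L ⊓ K) (LD.Vm ⊓ K)
        (l₁ := (D.PhiRed ∩ D.PhiM ∩ LD.PhiJ).toList)
        (l₂ := ((D.PhiRed ∩ D.PhiM) \ LD.PhiJ).toList) ?_ ?_ ?_ hum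
      · intro a ha
        rw [Finset.mem_toList, Finset.mem_inter] at ha
        exact le_inf (inf_le_right.trans (LD.hUL a ha.2)) inf_le_left
      · intro a ha
        rw [Finset.mem_toList, Finset.mem_sdiff, Finset.mem_inter] at ha
        exact le_inf (inf_le_right.trans
          (le_genU (Finset.mem_sdiff.2 ⟨ha.1.2, ha.2⟩))) inf_le_left
      · refine h4 _ (List.Nodup.append (Finset.nodup_toList _) (Finset.nodup_toList _) ?_) ?_
        · intro a ha hb
          rw [Finset.mem_toList, Finset.mem_inter] at ha
          rw [Finset.mem_toList, Finset.mem_sdiff] at hb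
          exact hb.2 ha.2
        · intro a
          simp only [List.mem_append, Finset.mem_toList, Finset.mem_sdiff, Finset.mem_inter]
          by_cases hJ : a ∈ LD.PhiJ <;> tauto
    obtain ⟨vp, hvp, a, ha, hupeq⟩ := hup_split
    obtain ⟨w, hw, vm, hvm, humeq⟩ := hum_split
    obtain ⟨hvpV, hvpK⟩ := Subgroup.mem_inf.1 hvp
    obtain ⟨haL, haK⟩ := Subgroup.mem_inf.1 ha
    obtain ⟨hwL, hwK⟩ := Subgroup.mem_inf.1 hw
    obtain ⟨hvmV, hvmK⟩ := Subgroup.mem_inf.1 hvm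
    -- x = vm * n lies in Q
    have hx_eq : vm * n = (vp * a * w)⁻¹ * q := by
      rw [hq_eq, hupeq, humeq]; group
    have hxQ : vm * n ∈ LD.Q := by
      rw [hx_eq]
      exact mul_mem (inv_mem (mul_mem (mul_mem (hVQ hvpV) (hLQ haL)) (hLQ hwL))) hqQ
    -- write vm * n in Q = L V⁺ and Bruhat-decompose the L-part
    have hxQ' : vm * n ∈ (↑LD.L * ↑(genU D.U (D.PhiP \ LD.PhiJ)) : Set G) := by
      rw [← LD.hQ_LV]; exact hxQ
    obtain ⟨l', hl', v', hv', hx2⟩ := Set.mem_mul.1 hxQ'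
    obtain ⟨bm, hbm, m, hm, bp, hbp, hl'eq⟩ := mem_mul3 (LD.hLdec hl')
    have heq : vm * n * 1 = bm * m * (bp * v') := by
      rw [mul_one, ← hx2, hl'eq]; group
    have hnm : n = m :=
      LD.bruhat_uniq vm n 1 bm m (bp * v') (hVmUm hvmV) hnN (one_mem _)
        (Subgroup.mem_inf.1 hbm).2 (Subgroup.mem_inf.1 hm).2
        (mul_mem (Subgroup.mem_inf.1 hbp).2 (hVpUp hv')) heq
    have hnL : n ∈ LD.L := by rw [hnm]; exact (Subgroup.mem_inf.1 hm).1
    -- V⁻-part is trivial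
    have hvmQ : vm ∈ LD.Q := by
      have : vm = (vm * n) * n⁻¹ := by group
      rw [this]; exact mul_mem hxQ (inv_mem (hLQ hnL))
    have hvm1 : vm = 1 := by
      have : vm ∈ genU D.U (D.PhiM \ LD.PhiJ) ⊓ LD.Q := Subgroup.mem_inf.2 ⟨hvmV, hvmQ⟩
      rw [LD.hVmQ] at this
      exact Subgroup.mem_bot.1 this
    refine ⟨vp, hvp, a * w * n, Subgroup.mem_inf.2
      ⟨mul_mem (mul_mem haL hwL) hnL, mul_mem (mul_mem haK hwK) hnK⟩, ?_⟩
    rw [hq_eq, hupeq, humeq, hvm1]; group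
  refine ⟨?_, ?_, ?_, ?_⟩
  · -- normality
    intro q hq v hv
    obtain ⟨hqQ, hqK⟩ := Subgroup.mem_inf.1 hq
    obtain ⟨hvV, hvK⟩ := Subgroup.mem_inf.1 hv
    have hqQ' : q ∈ (↑(genU D.U (D.PhiP \ LD.PhiJ)) * ↑LD.L : Set G) := by
      rw [← LD.hQ_VL]; exact hqQ
    obtain ⟨w, hw, l, hl, hqeq⟩ := Set.mem_mul.1 hqQ'
    refine Subgroup.mem_inf.2 ⟨?_, mul_mem (mul_mem hqK hvK) (inv_mem hqK)⟩
    have : q * v * q⁻¹ = w * (l * v * l⁻¹) * w⁻¹ := by rw [← hqeq]; group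
    rw [this]
    exact mul_mem (mul_mem hw (LD.hLnormV l hl v hvV)) (inv_mem hw)
  · -- trivial intersection
    exact eq_bot_iff.2 ((inf_le_inf inf_le_left inf_le_left).trans (le_of_eq LD.hVL))
  · -- product decomposition
    apply Set.Subset.antisymm
    · intro q hq
      obtain ⟨v, hv, l, hl, hqeq⟩ := key q hq
      exact Set.mem_mul.2 ⟨v, hv, l, hl, hqeq.symm⟩
    · rintro g hg
      obtain ⟨v, hv, l, hl, rfl⟩ := Set.mem_mul.1 hg
      obtain ⟨hvV, hvK⟩ := Subgroup.mem_inf.1 hv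
      obtain ⟨hlL, hlK⟩ := Subgroup.mem_inf.1 hl
      exact Subgroup.mem_inf.2 ⟨mul_mem (hVQ hvV) (hLQ hlL), mul_mem hvK hlK⟩
  · -- projection image
    ext l
    simp only [Set.mem_setOf_eq, SetLike.mem_coe, Subgroup.mem_inf]
    constructor
    · rintro ⟨hlL, v, hvV, hvlK⟩
      have hvlQK : v * l ∈ LD.Q ⊓ K :=
        Subgroup.mem_inf.2 ⟨mul_mem (hVQ hvV) (hLQ hlL), hvlK⟩
      obtain ⟨v', hv', l', hl', heq⟩ := key _ hvlQK
      obtain ⟨hv'V, hv'K⟩ := Subgroup.mem_inf.1 hv'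
      obtain ⟨hl'L, hl'K⟩ := Subgroup.mem_inf.1 hl'
      have h2' : v'⁻¹ * v = l' * l⁻¹ :=
        calc v'⁻¹ * v = v'⁻¹ * (v * l) * l⁻¹ := by group
        _ = v'⁻¹ * (v' * l') * l⁻¹ := by rw [heq]
        _ = l' * l⁻¹ := by group
      have hd : v'⁻¹ * v ∈ genU D.U (D.PhiP \ LD.PhiJ) ⊓ LD.L :=
        Subgroup.mem_inf.2 ⟨mul_mem (inv_mem hv'V) hvV,
          h2' ▸ mul_mem hl'L (inv_mem hlL)⟩
      rw [LD.hVL] at hd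
      have hd1 : v'⁻¹ * v = 1 := Subgroup.mem_bot.1 hd
      have hll : l' * l⁻¹ = 1 := by rw [← h2']; exact hd1
      have : l = l' := by
        have := mul_inv_eq_one.1 hll
        exact this.symm
      rw [this]
      exact ⟨hl'L, hl'K⟩
    · rintro ⟨hlL, hlK⟩
      exact ⟨hlL, 1, one_mem _, by rwa [one_mul]⟩
end

section
/- Under the root-subgroup data and Levi data hypotheses, if a subgroup K ≤ G satisfies condition (3.1), then L ∩ K = (U⁺ ∩ L ∩ K)(U⁻ ∩ L ∩ K)(N ∩ L ∩ K). (Abstract form of part (2) of the paper's Proposition following Henniart–Vignéras.) -/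
open Pointwise

section Aux

variable {G : Type*} [Group G] {ι : Type*}

lemma le_genU (U : ι → Subgroup G) {s : Finset ι} {α : ι} (h : α ∈ s) :
    U α ≤ genU U s := le_iSup₂ (f := fun β _ => U β) α h

lemma genU_mono (U : ι → Subgroup G) {s t : Finset ι} (h : s ⊆ t) :
    genU U s ≤ genU U t := iSup₂_le fun α hα => le_genU U (h hα)

lemma ofFn_prod_split (U : ι → Subgroup G) (K : Subgroup G) (S T : Subgroup G) :
    ∀ (l₁ : List ι) (l₂ : List ι), (∀ α ∈ l₁, K ⊓ U α ≤ S) → (∀ α ∈ l₂, K ⊓ U α ≤ T) →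
    ∀ (x : ∀ i : Fin (l₁ ++ l₂).length, ↥(K ⊓ U ((l₁ ++ l₂).get i))),
    ∃ a b : G, a ∈ S ∧ b ∈ T ∧ (List.ofFn fun i => ((x i : G))).prod = a * b := by
  intro l₁
  induction l₁ with
  | nil =>
    intro l₂ _ hT x
    refine ⟨1, _, one_mem _, ?_, (one_mul _).symm⟩
    apply list_prod_mem
    intro g hg
    rw [List.mem_ofFn] at hg
    obtain ⟨i, rfl⟩ := hg
    exact hT _ (l₂.get_mem i) (x i).2
  | cons α l₁' ih =>
    intro l₂ hS hT x
    obtain ⟨a, b, ha, hb, hab⟩ := ih l₂ (fun β hβ => hS β (List.mem_cons_of_mem _ hβ)) hT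
      (fun i => x i.succ)
    have hsp : (List.ofFn fun i : Fin ((α :: l₁') ++ l₂).length => ((x i : G))) =
        ((x (0 : Fin ((l₁' ++ l₂).length + 1)) : G)) ::
          List.ofFn fun i : Fin (l₁' ++ l₂).length => ((x i.succ : G)) :=
      List.ofFn_succ
    refine ⟨(x (0 : Fin ((l₁' ++ l₂).length + 1)) : G) * a, b,
      mul_mem (hS α List.mem_cons_self (x _).2) ha, hb, ?_⟩
    rw [hsp, List.prod_cons, hab, mul_assoc]

end Aux

/-- If `K ≤ G` satisfies condition (3.1), then
`L ∩ K = (U⁺ ∩ L ∩ K)(U⁻ ∩ L ∩ K)(N ∩ L ∩ K)`. -/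
theorem stmt2 {G : Type*} [Group G] {ι : Type*} [DecidableEq ι]
    (D : RootData G ι) (LD : LeviData D) (K : Subgroup G) (hK : D.cond31 K) :
    ((LD.L ⊓ K : Subgroup G) : Set G) =
      ((D.Up ⊓ LD.L ⊓ K : Subgroup G) : Set G) *
      ((D.Um ⊓ LD.L ⊓ K : Subgroup G) : Set G) *
      ((D.N ⊓ LD.L ⊓ K : Subgroup G) : Set G) := by
  classical
  obtain ⟨h1, h2, h3, h4⟩ := hK
  -- basic subgroup inclusions
  have hVpUp : genU D.U (D.PhiP \ LD.PhiJ) ≤ D.Up := genU_mono _ (Finset.sdiff_subset)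
  have hVmUm : genU D.U (D.PhiM \ LD.PhiJ) ≤ D.Um := genU_mono _ (Finset.sdiff_subset)
  have hVpQ : genU D.U (D.PhiP \ LD.PhiJ) ≤ LD.Q := by
    intro v hv
    have hmem : v ∈ ((genU D.U (D.PhiP \ LD.PhiJ) : Subgroup G) : Set G) * (LD.L : Set G) :=
      ⟨v, hv, 1, one_mem _, mul_one v⟩
    rw [← LD.hQ_VL] at hmem
    exact hmem
  have hLQ : LD.L ≤ LD.Q := by
    intro l hl
    have hmem : l ∈ ((genU D.U (D.PhiP \ LD.PhiJ) : Subgroup G) : Set G) * (LD.L : Set G) :=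
      ⟨1, one_mem _, l, hl, one_mul l⟩
    rw [← LD.hQ_VL] at hmem
    exact hmem
  apply Set.Subset.antisymm
  · -- hard direction
    intro k hk
    have hk' : k ∈ LD.L ⊓ K := hk
    have hkL : k ∈ LD.L := hk'.1
    have hkK : k ∈ K := hk'.2
    have hkdec : k ∈ ((K ⊓ D.Up : Subgroup G) : Set G) * ((K ⊓ D.Um : Subgroup G) : Set G) *
        ((K ⊓ D.N : Subgroup G) : Set G) := h2 ▸ hkK
    obtain ⟨y, hy, c, hc, hyc⟩ := hkdec
    obtain ⟨a, ha, b, hb, hab⟩ := hy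
    have haK : a ∈ K ⊓ D.Up := ha
    have hbK : b ∈ K ⊓ D.Um := hb
    have hcK : c ∈ K := (Subgroup.mem_inf.mp hc).1
    have hcN : c ∈ D.N := (Subgroup.mem_inf.mp hc).2
    -- split a over an ordering of the positive reduced roots with non-J roots first
    obtain ⟨a₁, a₂, ha₁, ha₂, haeq⟩ : ∃ a₁ a₂ : G,
        a₁ ∈ genU D.U (D.PhiP \ LD.PhiJ) ⊓ K ∧ a₂ ∈ (LD.L ⊓ D.Up) ⊓ K ∧ a = a₁ * a₂ := by
      set l₁ : List ι := ((D.PhiRed ∩ D.PhiP) \ LD.PhiJ).toList with hl₁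
      set l₂ : List ι := ((D.PhiRed ∩ D.PhiP) ∩ LD.PhiJ).toList with hl₂
      have hnd : (l₁ ++ l₂).Nodup := by
        refine List.Nodup.append (Finset.nodup_toList _) (Finset.nodup_toList _) ?_
        intro x hx1 hx2
        rw [hl₁, Finset.mem_toList, Finset.mem_sdiff] at hx1
        rw [hl₂, Finset.mem_toList, Finset.mem_inter] at hx2
        exact hx1.2 hx2.2
      have hmm : ∀ α, α ∈ l₁ ++ l₂ ↔ α ∈ D.PhiRed ∩ D.PhiP := by
        intro α
        simp only [hl₁, hl₂, List.mem_append, Finset.mem_toList, Finset.mem_sdiff,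
          Finset.mem_inter]
        tauto
      obtain ⟨-, hsurj⟩ := h3 (l₁ ++ l₂) hnd hmm
      have haR : a ∈ Set.range (fun x : ∀ i : Fin (l₁ ++ l₂).length,
          ↥(K ⊓ D.U ((l₁ ++ l₂).get i)) => (List.ofFn fun i => ((x i : G))).prod) := by
        rw [hsurj]
        exact ⟨haK.1, haK.2⟩
      obtain ⟨x, hx⟩ := haR
      have hS : ∀ α ∈ l₁, K ⊓ D.U α ≤ genU D.U (D.PhiP \ LD.PhiJ) ⊓ K := by
        intro α hα
        rw [hl₁, Finset.mem_toList, Finset.mem_sdiff, Finset.mem_inter] at hα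
        exact le_inf (le_trans inf_le_right
          (le_genU D.U (Finset.mem_sdiff.mpr ⟨hα.1.2, hα.2⟩))) inf_le_left
      have hT : ∀ α ∈ l₂, K ⊓ D.U α ≤ (LD.L ⊓ D.Up) ⊓ K := by
        intro α hα
        rw [hl₂, Finset.mem_toList, Finset.mem_inter, Finset.mem_inter] at hα
        exact le_inf (le_inf (le_trans inf_le_right (LD.hUL α hα.2))
          (le_trans inf_le_right (le_genU D.U hα.1.2))) inf_le_left
      obtain ⟨a₁, a₂, h₁, h₂, heq⟩ := ofFn_prod_split D.U K _ _ l₁ l₂ hS hT x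
      exact ⟨a₁, a₂, h₁, h₂, by rw [← heq]; exact hx.symm⟩
    -- split b over an ordering of the negative reduced roots with J roots first
    obtain ⟨b₁, b₂, hb₁, hb₂, hbeq⟩ : ∃ b₁ b₂ : G,
        b₁ ∈ (LD.L ⊓ D.Um) ⊓ K ∧ b₂ ∈ genU D.U (D.PhiM \ LD.PhiJ) ⊓ K ∧ b = b₁ * b₂ := by
      set l₁ : List ι := ((D.PhiRed ∩ D.PhiM) ∩ LD.PhiJ).toList with hl₁
      set l₂ : List ι := ((D.PhiRed ∩ D.PhiM) \ LD.PhiJ).toList with hl₂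
      have hnd : (l₁ ++ l₂).Nodup := by
        refine List.Nodup.append (Finset.nodup_toList _) (Finset.nodup_toList _) ?_
        intro x hx1 hx2
        rw [hl₁, Finset.mem_toList, Finset.mem_inter] at hx1
        rw [hl₂, Finset.mem_toList, Finset.mem_sdiff] at hx2
        exact hx2.2 hx1.2
      have hmm : ∀ α, α ∈ l₁ ++ l₂ ↔ α ∈ D.PhiRed ∩ D.PhiM := by
        intro α
        simp only [hl₁, hl₂, List.mem_append, Finset.mem_toList, Finset.mem_sdiff,
          Finset.mem_inter]
        tauto
      obtain ⟨-, hsurj⟩ := h4 (l₁ ++ l₂) hnd hmm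
      have hbR : b ∈ Set.range (fun x : ∀ i : Fin (l₁ ++ l₂).length,
          ↥(K ⊓ D.U ((l₁ ++ l₂).get i)) => (List.ofFn fun i => ((x i : G))).prod) := by
        rw [hsurj]
        exact ⟨hbK.1, hbK.2⟩
      obtain ⟨x, hx⟩ := hbR
      have hS : ∀ α ∈ l₁, K ⊓ D.U α ≤ (LD.L ⊓ D.Um) ⊓ K := by
        intro α hα
        rw [hl₁, Finset.mem_toList, Finset.mem_inter, Finset.mem_inter] at hα
        exact le_inf (le_inf (le_trans inf_le_right (LD.hUL α hα.2))
          (le_trans inf_le_right (le_genU D.U hα.1.2))) inf_le_left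
      have hT : ∀ α ∈ l₂, K ⊓ D.U α ≤ genU D.U (D.PhiM \ LD.PhiJ) ⊓ K := by
        intro α hα
        rw [hl₂, Finset.mem_toList, Finset.mem_sdiff, Finset.mem_inter] at hα
        exact le_inf (le_trans inf_le_right
          (le_genU D.U (Finset.mem_sdiff.mpr ⟨hα.1.2, hα.2⟩))) inf_le_left
      obtain ⟨b₁, b₂, h₁, h₂, heq⟩ := ofFn_prod_split D.U K _ _ l₁ l₂ hS hT x
      exact ⟨b₁, b₂, h₁, h₂, by rw [← heq]; exact hx.symm⟩
    have hk_eq : a₁ * a₂ * (b₁ * b₂) * c = k := by rw [← haeq, ← hbeq, show a * b = y from hab, show y * c = k from hyc]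
    -- b₂ * c lies in Q
    have hq : b₂ * c = b₁⁻¹ * (a₂⁻¹ * (a₁⁻¹ * k)) := by rw [← hk_eq]; group
    have hqQ : b₂ * c ∈ LD.Q := by
      rw [hq]
      exact mul_mem (inv_mem (hLQ hb₁.1.1)) (mul_mem (inv_mem (hLQ ha₂.1.1))
        (mul_mem (inv_mem (hVpQ ha₁.1)) (hLQ hkL)))
    -- write b₂ * c = l₂ * v₂ with l₂ ∈ L, v₂ ∈ V⁺, and decompose l₂
    have hqQ' : b₂ * c ∈ (LD.L : Set G) * ((genU D.U (D.PhiP \ LD.PhiJ) : Subgroup G) : Set G) :=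
      LD.hQ_LV ▸ hqQ
    obtain ⟨l₀, hl₀, v₂, hv₂, hlv⟩ := hqQ'
    obtain ⟨w, hw, bp, hbp, hwbp⟩ := LD.hLdec hl₀
    obtain ⟨bm, hbm, m₂, hm₂, hbmm⟩ := hw
    have hbmL : bm ∈ LD.L ⊓ D.Um := hbm
    have hm₂L : m₂ ∈ LD.L ⊓ D.N := hm₂
    have hbpL : bp ∈ LD.L ⊓ D.Up := hbp
    -- Bruhat uniqueness gives c = m₂, so c ∈ L
    have hcm : c = m₂ := by
      refine LD.bruhat_uniq b₂ c 1 bm m₂ (bp * v₂) (hVmUm hb₂.1) hcN (one_mem _)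
        hbmL.2 hm₂L.2 (mul_mem hbpL.2 (hVpUp hv₂)) ?_
      rw [mul_one, ← hlv, ← hwbp, ← hbmm]
      group
    have hcL : c ∈ LD.L := hcm ▸ hm₂L.1
    -- b₂ ∈ V⁻ ∩ Q = 1
    have hb₂Q : b₂ ∈ LD.Q := by
      have : b₂ = (b₂ * c) * c⁻¹ := by group
      rw [this]
      exact mul_mem hqQ (inv_mem (hLQ hcL))
    have hb₂1 : b₂ = 1 := by
      have hmem : b₂ ∈ genU D.U (D.PhiM \ LD.PhiJ) ⊓ LD.Q := ⟨hb₂.1, hb₂Q⟩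
      rw [LD.hVmQ, Subgroup.mem_bot] at hmem
      exact hmem
    -- a₁ ∈ V⁺ ∩ L = 1
    have ha₁L : a₁ ∈ LD.L := by
      have heq : a₁ = k * (a₂ * (b₁ * b₂) * c)⁻¹ := by rw [← hk_eq]; group
      rw [heq, hb₂1]
      exact mul_mem hkL (inv_mem (mul_mem (mul_mem ha₂.1.1 (mul_mem hb₁.1.1 (one_mem _))) hcL))
    have ha₁1 : a₁ = 1 := by
      have hmem : a₁ ∈ genU D.U (D.PhiP \ LD.PhiJ) ⊓ LD.L := ⟨ha₁.1, ha₁L⟩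
      rw [LD.hVL, Subgroup.mem_bot] at hmem
      exact hmem
    -- conclude
    refine ⟨a₂ * b₁, ⟨a₂, ?_, b₁, ?_, rfl⟩, c, ?_, ?_⟩
    · exact Subgroup.mem_inf.mpr ⟨Subgroup.mem_inf.mpr ⟨ha₂.1.2, ha₂.1.1⟩, ha₂.2⟩
    · exact Subgroup.mem_inf.mpr ⟨Subgroup.mem_inf.mpr ⟨hb₁.1.2, hb₁.1.1⟩, hb₁.2⟩
    · exact Subgroup.mem_inf.mpr ⟨Subgroup.mem_inf.mpr ⟨hcN, hcL⟩, hcK⟩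
    · rw [← hk_eq, ha₁1, hb₂1]; group
  · -- easy direction
    intro g hg
    obtain ⟨y, hy, c, hc, hyc⟩ := hg
    obtain ⟨a, ha, b, hb, hab⟩ := hy
    have ha' : a ∈ LD.L ⊓ K := by
      have := Subgroup.mem_inf.mp (SetLike.mem_coe.mp ha)
      exact ⟨(Subgroup.mem_inf.mp this.1).2, this.2⟩
    have hb' : b ∈ LD.L ⊓ K := by
      have := Subgroup.mem_inf.mp (SetLike.mem_coe.mp hb)
      exact ⟨(Subgroup.mem_inf.mp this.1).2, this.2⟩
    have hc' : c ∈ LD.L ⊓ K := by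
      have := Subgroup.mem_inf.mp (SetLike.mem_coe.mp hc)
      exact ⟨(Subgroup.mem_inf.mp this.1).2, this.2⟩
    rw [← hyc, ← hab]
    exact mul_mem (mul_mem ha' hb') hc'
end

section
/- Under the root-subgroup data, Levi data, and almost-product data hypotheses, if K_L ≤ L satisfies condition (3.1) with respect to L, then K_L ∩ G_h satisfies condition (3.1) with respect to G_h; if moreover K_L satisfies condition (3.2) with respect to L, then K_L ∩ G_h also satisfies condition (3.2) with respect to G_h. (Abstract form of the paper's Lemma that K_L ∩ G_h(F) inherits both conditions.) -/
open Pointwise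

section AxiomaticFramework

variable {G : Type*} [Group G] {ι : Type*}

variable [DecidableEq ι]

/-- Levi data (weak form): a subset `Φ_J ⊆ Φ` and subgroups `L, Q` with `Z ≤ L`,
`U_α ≤ L` for `α ∈ Φ_J`, and `U_J^± = L ∩ U^±` generated by the `U_α`, `α ∈ Φ_J^±`. -/
structure LeviDataW (D : RootData G ι) where
  PhiJ : Finset ι
  J_sub : PhiJ ⊆ D.Phi
  L : Subgroup G
  Q : Subgroup G
  hZL : D.Z ≤ L
  hUL : ∀ α ∈ PhiJ, D.U α ≤ L
  hUJp : L ⊓ D.Up = genU D.U (PhiJ ∩ D.PhiP)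
  hUJm : L ⊓ D.Um = genU D.U (PhiJ ∩ D.PhiM)

namespace LeviDataW

variable {D : RootData G ι} (LD : LeviDataW D)

/-- Condition (3.1) with respect to the Levi subgroup `L`. -/
def cond31L (K : Subgroup G) : Prop :=
  Cond31 D.U (LD.PhiJ ∩ D.PhiRed ∩ D.PhiP) (LD.PhiJ ∩ D.PhiRed ∩ D.PhiM)
    (LD.L ⊓ D.Up) (LD.L ⊓ D.Um) (D.N ⊓ LD.L) K

/-- Condition (3.2) with respect to the Levi subgroup `L`. -/
def cond32L (K : Subgroup G) : Prop :=
  Cond32 (LD.L ⊓ D.Up) (LD.L ⊓ D.Um) D.Z K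

end LeviDataW

/-- Almost-product data: a normal-factor subgroup `G_h ≤ L` with roots `Φ_h`, a
complementary set of roots `Φ_{l'}`, and a quotient homomorphism `π_l : L → G_l`. -/
structure APData {D : RootData G ι} (LD : LeviDataW D) (Gl : Type*) [Group Gl] where
  Gh : Subgroup G
  hGhL : Gh ≤ LD.L
  PhiH : Finset ι
  PhiL' : Finset ι
  hpartJ : PhiH ∪ PhiL' = LD.PhiJ
  hdisjHL : Disjoint PhiH PhiL'
  hUGh : ∀ α ∈ PhiH, D.U α ≤ Gh
  /-- every element of `U_h⁺U_h⁻` commutes with every element of `U_{l'}⁺U_{l'}⁻` -/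
  hcomm : ∀ x ∈ ((genU D.U (PhiH ∩ D.PhiP) : Subgroup G) : Set G) *
      ((genU D.U (PhiH ∩ D.PhiM) : Subgroup G) : Set G),
      ∀ y ∈ ((genU D.U (PhiL' ∩ D.PhiP) : Subgroup G) : Set G) *
      ((genU D.U (PhiL' ∩ D.PhiM) : Subgroup G) : Set G),
      x * y = y * x
  /-- the quotient homomorphism `π_l : L → G_l` -/
  pil : ↥LD.L →* Gl
  /-- `G_h ⊆ ker π_l` -/
  hGh_ker : ∀ x : ↥LD.L, (x : G) ∈ Gh → pil x = 1
  /-- `Z ∩ ker π_l ⊆ G_h` -/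
  hker_Z : ∀ x : ↥LD.L, (x : G) ∈ D.Z → pil x = 1 → (x : G) ∈ Gh
  /-- `π_l` is injective on `U_{l'}⁺` -/
  hinj_p : ∀ x y : ↥LD.L, (x : G) ∈ genU D.U (PhiL' ∩ D.PhiP) →
      (y : G) ∈ genU D.U (PhiL' ∩ D.PhiP) → pil x = pil y → x = y
  /-- `π_l` is injective on `U_{l'}⁻` -/
  hinj_m : ∀ x y : ↥LD.L, (x : G) ∈ genU D.U (PhiL' ∩ D.PhiM) →
      (y : G) ∈ genU D.U (PhiL' ∩ D.PhiM) → pil x = pil y → x = y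
  /-- `Z_l ⊆ N_l` -/
  hZlNl : (D.Z.subgroupOf LD.L).map pil ≤ ((D.N ⊓ LD.L).subgroupOf LD.L).map pil
  /-- `Z_l` normalizes `U_l⁺` -/
  hZl_norm_p : ∀ z ∈ (D.Z.subgroupOf LD.L).map pil,
      ∀ u ∈ ((genU D.U (PhiL' ∩ D.PhiP)).subgroupOf LD.L).map pil,
      z * u * z⁻¹ ∈ ((genU D.U (PhiL' ∩ D.PhiP)).subgroupOf LD.L).map pil
  /-- `Z_l` normalizes `U_l⁻` -/
  hZl_norm_m : ∀ z ∈ (D.Z.subgroupOf LD.L).map pil,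
      ∀ u ∈ ((genU D.U (PhiL' ∩ D.PhiM)).subgroupOf LD.L).map pil,
      z * u * z⁻¹ ∈ ((genU D.U (PhiL' ∩ D.PhiM)).subgroupOf LD.L).map pil
  /-- in `G_l`, the only solution of `u⁺u⁻n = 1` with `u⁺ ∈ U_l⁺`, `u⁻ ∈ U_l⁻`,
  `n ∈ N_l` is the trivial one -/
  huniq : ∀ up um n : Gl,
      up ∈ ((genU D.U (PhiL' ∩ D.PhiP)).subgroupOf LD.L).map pil →
      um ∈ ((genU D.U (PhiL' ∩ D.PhiM)).subgroupOf LD.L).map pil →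
      n ∈ ((D.N ⊓ LD.L).subgroupOf LD.L).map pil →
      up * um * n = 1 → up = 1 ∧ um = 1 ∧ n = 1

namespace APData

variable {D : RootData G ι} {LD : LeviDataW D} {Gl : Type*} [Group Gl] (AP : APData LD Gl)

/-- Condition (3.1) with respect to the normal subgroup `G_h`. -/
def cond31h (Kh : Subgroup G) : Prop :=
  Cond31 D.U (AP.PhiH ∩ D.PhiRed ∩ D.PhiP) (AP.PhiH ∩ D.PhiRed ∩ D.PhiM)
    (genU D.U (AP.PhiH ∩ D.PhiP)) (genU D.U (AP.PhiH ∩ D.PhiM)) (D.N ⊓ AP.Gh) Kh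

/-- Condition (3.2) with respect to the normal subgroup `G_h`. -/
def cond32h (Kh : Subgroup G) : Prop :=
  Cond32 (genU D.U (AP.PhiH ∩ D.PhiP)) (genU D.U (AP.PhiH ∩ D.PhiM)) (D.Z ⊓ AP.Gh) Kh

end APData

end AxiomaticFramework


namespace S6aux

theorem ofFn_append_split {γ : Type*} (l m : List γ) {β : Type*} (f : Fin (l ++ m).length → β) :
    List.ofFn f = (List.ofFn fun i : Fin l.length => f ⟨i.1, by simp only [List.length_append]; omega⟩)
      ++ (List.ofFn fun j : Fin m.length => f ⟨l.length + j.1, by simp only [List.length_append]; omega⟩) := by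
  apply List.ext_getElem
  · simp
  · intro n h1 h2
    rw [List.getElem_ofFn, List.getElem_append]
    split
    · next h' =>
      simp only [List.length_ofFn] at h'
      rw [List.getElem_ofFn]
    · next h' =>
      simp only [List.length_ofFn] at h'
      rw [List.getElem_ofFn]
      congr 1
      apply Fin.ext
      simp only [List.length_ofFn] at *
      omega

variable {G : Type*} [Group G] {ι : Type*}

theorem get_app_left (l m : List ι) (i : Fin l.length) (h : i.1 < (l ++ m).length) :
    (l ++ m).get ⟨i.1, h⟩ = l.get i := by
  simp [List.get_eq_getElem, List.getElem_append, i.2]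

theorem get_app_right (l m : List ι) (j : Fin m.length) (h : l.length + j.1 < (l ++ m).length) :
    (l ++ m).get ⟨l.length + j.1, h⟩ = m.get j := by
  simp [List.get_eq_getElem, List.getElem_append]

theorem prod_tuple_mem {U : ι → Subgroup G} {K : Subgroup G} {l : List ι} (H : Subgroup G)
    (y : ∀ i : Fin l.length, ↥(K ⊓ U (l.get i))) (hy : ∀ i, ((y i : G)) ∈ H) :
    (List.ofFn fun i => ((y i : G))).prod ∈ H := by
  apply list_prod_mem
  intro w hw
  rw [List.mem_ofFn] at hw
  obtain ⟨i, rfl⟩ := hw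
  exact hy i

theorem prodSplit (U : ι → Subgroup G) (K : Subgroup G) (l m : List ι)
    (x : ∀ i : Fin (l ++ m).length, ↥(K ⊓ U ((l ++ m).get i))) :
    ∃ (y : ∀ i : Fin l.length, ↥(K ⊓ U (l.get i))) (z : ∀ j : Fin m.length, ↥(K ⊓ U (m.get j))),
      (List.ofFn fun i => ((x i : G))).prod
        = (List.ofFn fun i => ((y i : G))).prod * (List.ofFn fun j => ((z j : G))).prod := by
  have lt1 : ∀ i : Fin l.length, i.1 < (l ++ m).length := fun i => by
    simp only [List.length_append]; omega
  have lt2 : ∀ j : Fin m.length, l.length + j.1 < (l ++ m).length := fun j => by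
    simp only [List.length_append]; omega
  refine ⟨fun i => ⟨(x ⟨i.1, lt1 i⟩ : G), (get_app_left l m i (lt1 i)) ▸ (x ⟨i.1, lt1 i⟩).2⟩,
    fun j => ⟨(x ⟨l.length + j.1, lt2 j⟩ : G),
      (get_app_right l m j (lt2 j)) ▸ (x ⟨l.length + j.1, lt2 j⟩).2⟩, ?_⟩
  rw [ofFn_append_split l m (fun i => ((x i : G))), List.prod_append]

theorem prodPad (U : ι → Subgroup G) (K K' : Subgroup G) (hKK' : K ≤ K') (l m : List ι)
    (y : ∀ i : Fin l.length, ↥(K ⊓ U (l.get i))) :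
    ∃ x : ∀ i : Fin (l ++ m).length, ↥(K' ⊓ U ((l ++ m).get i)),
      ((List.ofFn fun i => ((x i : G))).prod = (List.ofFn fun i => ((y i : G))).prod) ∧
      ∀ i : Fin l.length,
        (x ⟨i.1, by simp only [List.length_append]; omega⟩ : G) = (y i : G) := by
  classical
  let x : ∀ i : Fin (l ++ m).length, ↥(K' ⊓ U ((l ++ m).get i)) := fun i =>
    if h : i.1 < l.length then
      ⟨(y ⟨i.1, h⟩ : G), ⟨hKK' (y ⟨i.1, h⟩).2.1,
        (get_app_left l m ⟨i.1, h⟩ i.2).symm ▸ (y ⟨i.1, h⟩).2.2⟩⟩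
    else 1
  refine ⟨x, ?_, ?_⟩
  · rw [ofFn_append_split l m (fun i => ((x i : G))), List.prod_append]
    have h1 : (List.ofFn fun i : Fin l.length =>
        ((x ⟨i.1, by simp only [List.length_append]; omega⟩ : _) : G))
        = List.ofFn fun i : Fin l.length => ((y i : G)) := by
      congr 1
      funext i
      simp only [x, dif_pos i.2]
    have h2 : (List.ofFn fun j : Fin m.length =>
        ((x ⟨l.length + j.1, by simp only [List.length_append]; omega⟩ : _) : G))
        = List.ofFn fun _ : Fin m.length => (1 : G) := by
      congr 1
      funext j
      simp only [x, dif_neg (by omega : ¬ l.length + j.1 < l.length)]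
      rfl
    rw [h1, h2]
    simp
  · intro i
    simp only [x, dif_pos i.2]


theorem genU_mono {G : Type*} [Group G] {ι : Type*} (U : ι → Subgroup G) {s t : Finset ι}
    (h : s ⊆ t) : genU U s ≤ genU U t := biSup_mono fun _ hα => h hα

theorem le_genU {G : Type*} [Group G] {ι : Type*} (U : ι → Subgroup G) {s : Finset ι} {α : ι}
    (h : α ∈ s) : U α ≤ genU U s := le_iSup₂ (f := fun β (_ : β ∈ s) => U β) α h

theorem genU_le {G : Type*} [Group G] {ι : Type*} (U : ι → Subgroup G) {s : Finset ι}
    {H : Subgroup G} (h : ∀ α ∈ s, U α ≤ H) : genU U s ≤ H := iSup₂_le h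

theorem decomp {G : Type*} [Group G] {ι : Type*} [DecidableEq ι] (U : ι → Subgroup G)
    (Full A B : Finset ι)
    (hFull : ∀ a, a ∈ Full ↔ a ∈ A ∨ a ∈ B) (hdisj : ∀ a, a ∈ A → a ∉ B)
    (K T Hb : Subgroup G)
    (hPB : ∀ l', l'.Nodup → (∀ a, a ∈ l' ↔ a ∈ Full) → ProdBij U K T l')
    (hB : ∀ α ∈ B, U α ≤ Hb)
    (l : List ι) (hl : l.Nodup) (hlA : ∀ a, a ∈ l ↔ a ∈ A)
    (u : G) (hu : u ∈ K ⊓ T) :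
    ∃ (y : ∀ i : Fin l.length, ↥(K ⊓ U (l.get i))) (b : G),
      b ∈ K ∧ b ∈ Hb ∧ u = (List.ofFn fun i => ((y i : G))).prod * b := by
  classical
  set m := B.toList with hmdef
  have hm : ∀ a, a ∈ m ↔ a ∈ B := fun a => Finset.mem_toList
  have hnodup : (l ++ m).Nodup := List.nodup_append.2
    ⟨hl, B.nodup_toList, fun a ha b hb hab => hdisj a ((hlA a).1 ha) ((hm a).1 (by rw [hab]; exact hb))⟩
  have hmem : ∀ a, a ∈ l ++ m ↔ a ∈ Full := fun a => by
    rw [List.mem_append, hFull, hlA, hm]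
  obtain ⟨hinj, hrange⟩ := hPB (l ++ m) hnodup hmem
  have hu' : u ∈ Set.range (fun x : ∀ i : Fin (l ++ m).length, ↥(K ⊓ U ((l ++ m).get i)) =>
      (List.ofFn fun i => ((x i : G))).prod) := by
    rw [hrange]; exact hu
  obtain ⟨x, hx⟩ := hu'
  obtain ⟨y, z, hyz⟩ := prodSplit U K l m x
  refine ⟨y, (List.ofFn fun j => ((z j : G))).prod, ?_, ?_, ?_⟩
  · exact prod_tuple_mem K z fun j => (z j).2.1
  · apply list_prod_mem
    intro w hw
    rw [List.mem_ofFn] at hw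
    obtain ⟨j, rfl⟩ := hw
    exact hB _ ((hm _).1 (m.get_mem j)) (z j).2.2
  · rw [← hx]; exact hyz

end S6aux
/-- If `K_L ≤ L` satisfies condition (3.1) with respect to `L`, then
`K_L ∩ G_h` satisfies condition (3.1) with respect to `G_h`; if moreover `K_L`
satisfies condition (3.2) with respect to `L`, then `K_L ∩ G_h` also satisfies
condition (3.2) with respect to `G_h`. -/
theorem stmt6 {G : Type*} [Group G] {ι : Type*} [DecidableEq ι] {Gl : Type*} [Group Gl]
    (D : RootData G ι) (LD : LeviDataW D) (AP : APData LD Gl)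
    (KL : Subgroup G) (hKLle : KL ≤ LD.L) (h31 : LD.cond31L KL) :
    AP.cond31h (KL ⊓ AP.Gh) ∧ (LD.cond32L KL → AP.cond32h (KL ⊓ AP.Gh)) := by
  classical
  obtain ⟨hL1, hL2, hLBp, hLBm⟩ := h31
  -- Finset facts
  have hHJ : AP.PhiH ⊆ LD.PhiJ := by rw [← AP.hpartJ]; exact Finset.subset_union_left
  have hLJ : AP.PhiL' ⊆ LD.PhiJ := by rw [← AP.hpartJ]; exact Finset.subset_union_right
  -- Subgroup inclusions
  have hUhpLUp : genU D.U (AP.PhiH ∩ D.PhiP) ≤ LD.L ⊓ D.Up := by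
    rw [LD.hUJp]
    exact S6aux.genU_mono D.U (Finset.inter_subset_inter hHJ (Finset.Subset.refl _))
  have hUhmLUm : genU D.U (AP.PhiH ∩ D.PhiM) ≤ LD.L ⊓ D.Um := by
    rw [LD.hUJm]
    exact S6aux.genU_mono D.U (Finset.inter_subset_inter hHJ (Finset.Subset.refl _))
  have hUlpL : genU D.U (AP.PhiL' ∩ D.PhiP) ≤ LD.L := by
    refine le_trans (S6aux.genU_mono D.U
      (Finset.inter_subset_inter hLJ (Finset.Subset.refl _))) ?_
    rw [← LD.hUJp]; exact inf_le_left
  have hUlmL : genU D.U (AP.PhiL' ∩ D.PhiM) ≤ LD.L := by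
    refine le_trans (S6aux.genU_mono D.U
      (Finset.inter_subset_inter hLJ (Finset.Subset.refl _))) ?_
    rw [← LD.hUJm]; exact inf_le_left
  -- commutation
  have hcomm' : ∀ x : G,
      (x ∈ genU D.U (AP.PhiH ∩ D.PhiP) ∨ x ∈ genU D.U (AP.PhiH ∩ D.PhiM)) →
      ∀ y : G,
      (y ∈ genU D.U (AP.PhiL' ∩ D.PhiP) ∨ y ∈ genU D.U (AP.PhiL' ∩ D.PhiM)) →
      x * y = y * x := by
    intro x hx y hy
    apply AP.hcomm
    · rcases hx with h | h
      · exact Set.mem_mul.2 ⟨x, h, 1, one_mem _, mul_one x⟩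
      · exact Set.mem_mul.2 ⟨1, one_mem _, x, h, one_mul x⟩
    · rcases hy with h | h
      · exact Set.mem_mul.2 ⟨y, h, 1, one_mem _, mul_one y⟩
      · exact Set.mem_mul.2 ⟨1, one_mem _, y, h, one_mul y⟩
  -- pil helpers
  set P : ∀ g : G, g ∈ LD.L → Gl := fun g hg => AP.pil ⟨g, hg⟩ with hPdef
  have pil_mul : ∀ (a b : G) (ha : a ∈ LD.L) (hb : b ∈ LD.L) (hab : a * b ∈ LD.L),
      P (a * b) hab = P a ha * P b hb := fun a b ha hb hab => map_mul AP.pil ⟨a, ha⟩ ⟨b, hb⟩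
  have pil_eq : ∀ (g g' : G) (hg : g ∈ LD.L) (hg' : g' ∈ LD.L), g = g' → P g hg = P g' hg' := by
    intro g g' hg hg' h; subst h; rfl
  have pil_ker : ∀ (g : G) (hgL : g ∈ LD.L), g ∈ AP.Gh → P g hgL = 1 :=
    fun g hgL hg => AP.hGh_ker ⟨g, hgL⟩ hg
  have memUlpIm : ∀ (g : G) (hgL : g ∈ LD.L), g ∈ genU D.U (AP.PhiL' ∩ D.PhiP) →
      P g hgL ∈ ((genU D.U (AP.PhiL' ∩ D.PhiP)).subgroupOf LD.L).map AP.pil :=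
    fun g hgL hg => ⟨⟨g, hgL⟩, Subgroup.mem_subgroupOf.2 hg, rfl⟩
  have memUlmIm : ∀ (g : G) (hgL : g ∈ LD.L), g ∈ genU D.U (AP.PhiL' ∩ D.PhiM) →
      P g hgL ∈ ((genU D.U (AP.PhiL' ∩ D.PhiM)).subgroupOf LD.L).map AP.pil :=
    fun g hgL hg => ⟨⟨g, hgL⟩, Subgroup.mem_subgroupOf.2 hg, rfl⟩
  have memNlIm : ∀ (g : G) (hgL : g ∈ LD.L), g ∈ D.N →
      P g hgL ∈ (((D.N ⊓ LD.L)).subgroupOf LD.L).map AP.pil :=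
    fun g hgL hg => ⟨⟨g, hgL⟩, Subgroup.mem_subgroupOf.2 ⟨hg, hgL⟩, rfl⟩
  have memZlIm : ∀ (g : G) (hgL : g ∈ LD.L), g ∈ D.Z →
      P g hgL ∈ (D.Z.subgroupOf LD.L).map AP.pil :=
    fun g hgL hg => ⟨⟨g, hgL⟩, Subgroup.mem_subgroupOf.2 hg, rfl⟩
  have injp : ∀ (g : G) (hgL : g ∈ LD.L), g ∈ genU D.U (AP.PhiL' ∩ D.PhiP) →
      P g hgL = 1 → g = 1 := by
    intro g hgL hg h1
    have h2 := AP.hinj_p ⟨g, hgL⟩ 1 hg (by simpa using one_mem (genU D.U (AP.PhiL' ∩ D.PhiP)))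
      (by rw [map_one]; exact h1)
    simpa using congrArg Subtype.val h2
  have injm : ∀ (g : G) (hgL : g ∈ LD.L), g ∈ genU D.U (AP.PhiL' ∩ D.PhiM) →
      P g hgL = 1 → g = 1 := by
    intro g hgL hg h1
    have h2 := AP.hinj_m ⟨g, hgL⟩ 1 hg (by simpa using one_mem (genU D.U (AP.PhiL' ∩ D.PhiM)))
      (by rw [map_one]; exact h1)
    simpa using congrArg Subtype.val h2
  -- uniqueness consequences
  have uniq1 : ∀ a b c : Gl,
      a ∈ ((genU D.U (AP.PhiL' ∩ D.PhiM)).subgroupOf LD.L).map AP.pil →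
      b ∈ ((genU D.U (AP.PhiL' ∩ D.PhiP)).subgroupOf LD.L).map AP.pil →
      c ∈ ((D.N ⊓ LD.L).subgroupOf LD.L).map AP.pil →
      a * b * c = 1 → a = 1 ∧ b = 1 ∧ c = 1 := by
    intro a b c ha hb hc h
    have hab : a * b = c⁻¹ := mul_eq_one_iff_eq_inv.1 h
    have h2 : b⁻¹ * a⁻¹ * c⁻¹ = 1 := by
      rw [← mul_inv_rev, hab, inv_inv, mul_inv_cancel]
    obtain ⟨h3, h4, h5⟩ := AP.huniq b⁻¹ a⁻¹ c⁻¹ (inv_mem hb) (inv_mem ha) (inv_mem hc) h2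
    exact ⟨inv_eq_one.1 h4, inv_eq_one.1 h3, inv_eq_one.1 h5⟩
  have uniq3 : ∀ a b c z : Gl,
      a ∈ ((genU D.U (AP.PhiL' ∩ D.PhiP)).subgroupOf LD.L).map AP.pil →
      b ∈ ((genU D.U (AP.PhiL' ∩ D.PhiM)).subgroupOf LD.L).map AP.pil →
      c ∈ ((genU D.U (AP.PhiL' ∩ D.PhiP)).subgroupOf LD.L).map AP.pil →
      z ∈ (D.Z.subgroupOf LD.L).map AP.pil →
      a * b * c * z = 1 → b = 1 ∧ z = 1 ∧ c * a = 1 := by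
    intro a b c z ha hb hc hz h
    have hw : z⁻¹ * c * z ∈ ((genU D.U (AP.PhiL' ∩ D.PhiP)).subgroupOf LD.L).map AP.pil := by
      simpa using AP.hZl_norm_p z⁻¹ (inv_mem hz) c hc
    have h3 : a * b * z * (z⁻¹ * c * z) = 1 := by
      have e : a * b * z * (z⁻¹ * c * z) = a * b * c * z := by group
      rw [e]; exact h
    have h4 : a * b * z = (z⁻¹ * c * z)⁻¹ := eq_inv_of_mul_eq_one_left h3
    have h2 : ((z⁻¹ * c * z) * a) * b * z = 1 := by
      calc ((z⁻¹ * c * z) * a) * b * z = (z⁻¹ * c * z) * (a * b * z) := by group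
        _ = (z⁻¹ * c * z) * (z⁻¹ * c * z)⁻¹ := by rw [h4]
        _ = 1 := mul_inv_cancel _
    obtain ⟨h5, h6, h7⟩ := AP.huniq ((z⁻¹ * c * z) * a) b z
      (mul_mem hw ha) hb (AP.hZlNl hz) h2
    refine ⟨h6, h7, ?_⟩
    have hwc : z⁻¹ * c * z = c := by rw [h7]; group
    rw [← hwc]; exact h5
  -- list-level decompositions from ProdBij surjectivity
  have hFullP : ∀ a, a ∈ LD.PhiJ ∩ D.PhiRed ∩ D.PhiP ↔
      a ∈ AP.PhiH ∩ D.PhiRed ∩ D.PhiP ∨ a ∈ AP.PhiL' ∩ D.PhiRed ∩ D.PhiP := by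
    intro a
    simp only [Finset.mem_inter, ← AP.hpartJ, Finset.mem_union]
    tauto
  have hFullM : ∀ a, a ∈ LD.PhiJ ∩ D.PhiRed ∩ D.PhiM ↔
      a ∈ AP.PhiH ∩ D.PhiRed ∩ D.PhiM ∨ a ∈ AP.PhiL' ∩ D.PhiRed ∩ D.PhiM := by
    intro a
    simp only [Finset.mem_inter, ← AP.hpartJ, Finset.mem_union]
    tauto
  have hdisjP : ∀ a, a ∈ AP.PhiH ∩ D.PhiRed ∩ D.PhiP → a ∉ AP.PhiL' ∩ D.PhiRed ∩ D.PhiP := by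
    intro a ha hb
    exact (Finset.disjoint_left.1 AP.hdisjHL)
      (Finset.mem_inter.1 (Finset.mem_inter.1 ha).1).1
      (Finset.mem_inter.1 (Finset.mem_inter.1 hb).1).1
  have hdisjM : ∀ a, a ∈ AP.PhiH ∩ D.PhiRed ∩ D.PhiM → a ∉ AP.PhiL' ∩ D.PhiRed ∩ D.PhiM := by
    intro a ha hb
    exact (Finset.disjoint_left.1 AP.hdisjHL)
      (Finset.mem_inter.1 (Finset.mem_inter.1 ha).1).1
      (Finset.mem_inter.1 (Finset.mem_inter.1 hb).1).1
  have decPlist : ∀ (l : List ι), l.Nodup →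
      (∀ a, a ∈ l ↔ a ∈ AP.PhiH ∩ D.PhiRed ∩ D.PhiP) →
      ∀ u ∈ KL ⊓ (LD.L ⊓ D.Up),
      ∃ (y : ∀ i : Fin l.length, ↥(KL ⊓ D.U (l.get i))) (b : G),
        b ∈ KL ∧ b ∈ genU D.U (AP.PhiL' ∩ D.PhiP) ∧
        u = (List.ofFn fun i => ((y i : G))).prod * b := by
    intro l hl hlA u hu
    refine S6aux.decomp D.U (LD.PhiJ ∩ D.PhiRed ∩ D.PhiP) (AP.PhiH ∩ D.PhiRed ∩ D.PhiP)
      (AP.PhiL' ∩ D.PhiRed ∩ D.PhiP) hFullP hdisjP KL (LD.L ⊓ D.Up) _ hLBp ?_ l hl hlA u hu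
    intro α hα
    refine S6aux.le_genU D.U (Finset.mem_inter.2
      ⟨(Finset.mem_inter.1 (Finset.mem_inter.1 hα).1).1, (Finset.mem_inter.1 hα).2⟩)
  have decMlist : ∀ (l : List ι), l.Nodup →
      (∀ a, a ∈ l ↔ a ∈ AP.PhiH ∩ D.PhiRed ∩ D.PhiM) →
      ∀ u ∈ KL ⊓ (LD.L ⊓ D.Um),
      ∃ (y : ∀ i : Fin l.length, ↥(KL ⊓ D.U (l.get i))) (b : G),
        b ∈ KL ∧ b ∈ genU D.U (AP.PhiL' ∩ D.PhiM) ∧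
        u = (List.ofFn fun i => ((y i : G))).prod * b := by
    intro l hl hlA u hu
    refine S6aux.decomp D.U (LD.PhiJ ∩ D.PhiRed ∩ D.PhiM) (AP.PhiH ∩ D.PhiRed ∩ D.PhiM)
      (AP.PhiL' ∩ D.PhiRed ∩ D.PhiM) hFullM hdisjM KL (LD.L ⊓ D.Um) _ hLBm ?_ l hl hlA u hu
    intro α hα
    refine S6aux.le_genU D.U (Finset.mem_inter.2
      ⟨(Finset.mem_inter.1 (Finset.mem_inter.1 hα).1).1, (Finset.mem_inter.1 hα).2⟩)
  have hgetP : ∀ (l : List ι), (∀ a, a ∈ l ↔ a ∈ AP.PhiH ∩ D.PhiRed ∩ D.PhiP) →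
      ∀ i : Fin l.length, l.get i ∈ AP.PhiH ∧ l.get i ∈ AP.PhiH ∩ D.PhiP := by
    intro l hlA i
    have h0 := (hlA _).1 (l.get_mem i)
    have h1 := Finset.mem_inter.1 h0
    have h2 := Finset.mem_inter.1 h1.1
    exact ⟨h2.1, Finset.mem_inter.2 ⟨h2.1, h1.2⟩⟩
  have hgetM : ∀ (l : List ι), (∀ a, a ∈ l ↔ a ∈ AP.PhiH ∩ D.PhiRed ∩ D.PhiM) →
      ∀ i : Fin l.length, l.get i ∈ AP.PhiH ∧ l.get i ∈ AP.PhiH ∩ D.PhiM := by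
    intro l hlA i
    have h0 := (hlA _).1 (l.get_mem i)
    have h1 := Finset.mem_inter.1 h0
    have h2 := Finset.mem_inter.1 h1.1
    exact ⟨h2.1, Finset.mem_inter.2 ⟨h2.1, h1.2⟩⟩
  -- element-level decompositions
  have decP : ∀ u ∈ KL ⊓ (LD.L ⊓ D.Up), ∃ a b : G,
      a ∈ KL ∧ a ∈ AP.Gh ∧ a ∈ genU D.U (AP.PhiH ∩ D.PhiP) ∧
      b ∈ KL ∧ b ∈ LD.L ∧ b ∈ genU D.U (AP.PhiL' ∩ D.PhiP) ∧ u = a * b := by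
    intro u hu
    obtain ⟨y, b, hbK, hbU, hprod⟩ := decPlist (AP.PhiH ∩ D.PhiRed ∩ D.PhiP).toList
      (Finset.nodup_toList _) (fun a => Finset.mem_toList) u hu
    refine ⟨_, b, ?_, ?_, ?_, hbK, hUlpL hbU, hbU, hprod⟩
    · exact S6aux.prod_tuple_mem KL y fun i => (y i).2.1
    · refine S6aux.prod_tuple_mem _ y fun i => ?_
      exact AP.hUGh _ ((hgetP _ (fun a => Finset.mem_toList) i).1) (y i).2.2
    · refine S6aux.prod_tuple_mem _ y fun i => ?_
      exact S6aux.le_genU D.U ((hgetP _ (fun a => Finset.mem_toList) i).2) (y i).2.2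
  have decM : ∀ u ∈ KL ⊓ (LD.L ⊓ D.Um), ∃ a b : G,
      a ∈ KL ∧ a ∈ AP.Gh ∧ a ∈ genU D.U (AP.PhiH ∩ D.PhiM) ∧
      b ∈ KL ∧ b ∈ LD.L ∧ b ∈ genU D.U (AP.PhiL' ∩ D.PhiM) ∧ u = a * b := by
    intro u hu
    obtain ⟨y, b, hbK, hbU, hprod⟩ := decMlist (AP.PhiH ∩ D.PhiRed ∩ D.PhiM).toList
      (Finset.nodup_toList _) (fun a => Finset.mem_toList) u hu
    refine ⟨_, b, ?_, ?_, ?_, hbK, hUlmL hbU, hbU, hprod⟩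
    · exact S6aux.prod_tuple_mem KL y fun i => (y i).2.1
    · refine S6aux.prod_tuple_mem _ y fun i => ?_
      exact AP.hUGh _ ((hgetM _ (fun a => Finset.mem_toList) i).1) (y i).2.2
    · refine S6aux.prod_tuple_mem _ y fun i => ?_
      exact S6aux.le_genU D.U ((hgetM _ (fun a => Finset.mem_toList) i).2) (y i).2.2
  refine ⟨⟨?_, ?_, ?_, ?_⟩, ?_⟩
  · -- K_h = (K_h ⊓ U_h⁻)(K_h ⊓ U_h⁺)(K_h ⊓ (N ⊓ G_h))
    apply Set.Subset.antisymm
    · intro k hk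
      have hk' : k ∈ KL ⊓ AP.Gh := hk
      have hkKL : k ∈ KL := hk'.1
      have hkGh : k ∈ AP.Gh := hk'.2
      have hk2 : k ∈ (↑(KL ⊓ (LD.L ⊓ D.Um)) * ↑(KL ⊓ (LD.L ⊓ D.Up)) *
          ↑(KL ⊓ (D.N ⊓ LD.L)) : Set G) := by
        rw [← hL1]; exact hkKL
      obtain ⟨w, hw, n, hn, hkeq⟩ := Set.mem_mul.1 hk2
      obtain ⟨um, hum, up, hup, hweq⟩ := Set.mem_mul.1 hw
      obtain ⟨a1, b1, ha1K, ha1Gh, ha1U, hb1K, hb1L, hb1U, hume⟩ := decM um hum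
      obtain ⟨a2, b2, ha2K, ha2Gh, ha2U, hb2K, hb2L, hb2U, hupe⟩ := decP up hup
      have hn' : n ∈ KL ⊓ (D.N ⊓ LD.L) := hn
      have hnK : n ∈ KL := hn'.1
      have hnN : n ∈ D.N := hn'.2.1
      have hnL : n ∈ LD.L := hn'.2.2
      have hcba : b1 * a2 = a2 * b1 := (hcomm' a2 (Or.inl ha2U) b1 (Or.inr hb1U)).symm
      have hkeq2 : k = (a1 * a2) * ((b1 * b2) * n) := by
        rw [← hkeq, ← hweq, hume, hupe]
        calc (a1 * b1) * (a2 * b2) * n = a1 * (b1 * a2) * b2 * n := by group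
          _ = a1 * (a2 * b1) * b2 * n := by rw [hcba]
          _ = (a1 * a2) * ((b1 * b2) * n) := by group
      have haaL : a1 * a2 ∈ LD.L := mul_mem (AP.hGhL ha1Gh) (AP.hGhL ha2Gh)
      have hbbnL : (b1 * b2) * n ∈ LD.L := mul_mem (mul_mem hb1L hb2L) hnL
      have hrest : (b1 * b2) * n = (a1 * a2)⁻¹ * k := by rw [hkeq2]; group
      have hrestGh : (a1 * a2)⁻¹ * k ∈ AP.Gh :=
        mul_mem (inv_mem (mul_mem ha1Gh ha2Gh)) hkGh
      have hPzero : P b1 hb1L * P b2 hb2L * P n hnL = 1 := by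
        rw [← pil_mul b1 b2 hb1L hb2L (mul_mem hb1L hb2L),
          ← pil_mul (b1 * b2) n (mul_mem hb1L hb2L) hnL hbbnL]
        exact (pil_eq _ _ hbbnL (mul_mem (inv_mem haaL) (hKLle hkKL)) hrest).trans
          (pil_ker _ _ hrestGh)
      obtain ⟨e1, e2, e3⟩ := uniq1 _ _ _ (memUlmIm b1 hb1L hb1U) (memUlpIm b2 hb2L hb2U)
        (memNlIm n hnL hnN) hPzero
      have hb1e : b1 = 1 := injm b1 hb1L hb1U e1
      have hb2e : b2 = 1 := injp b2 hb2L hb2U e2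
      have hnGh : n ∈ AP.Gh := by
        have hne : n = (a1 * a2)⁻¹ * k := by rw [← hrest, hb1e, hb2e]; group
        rw [hne]; exact hrestGh
      refine Set.mem_mul.2 ⟨a1 * a2, Set.mem_mul.2 ⟨a1, ?_, a2, ?_, rfl⟩, n, ?_, ?_⟩
      · exact ⟨⟨ha1K, ha1Gh⟩, ha1U⟩
      · exact ⟨⟨ha2K, ha2Gh⟩, ha2U⟩
      · exact ⟨⟨hnK, hnGh⟩, hnN, hnGh⟩
      · rw [hkeq2, hb1e, hb2e]; group
    · intro k hk
      obtain ⟨w, hw, n, hn, hkeq⟩ := Set.mem_mul.1 hk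
      obtain ⟨p, hp, q, hq, hweq⟩ := Set.mem_mul.1 hw
      have hp' : p ∈ (KL ⊓ AP.Gh) ⊓ genU D.U (AP.PhiH ∩ D.PhiM) := hp
      have hq' : q ∈ (KL ⊓ AP.Gh) ⊓ genU D.U (AP.PhiH ∩ D.PhiP) := hq
      have hn' : n ∈ (KL ⊓ AP.Gh) ⊓ (D.N ⊓ AP.Gh) := hn
      rw [← hkeq, ← hweq]
      exact mul_mem (mul_mem hp'.1 hq'.1) hn'.1
  · -- K_h = (K_h ⊓ U_h⁺)(K_h ⊓ U_h⁻)(K_h ⊓ (N ⊓ G_h))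
    apply Set.Subset.antisymm
    · intro k hk
      have hk' : k ∈ KL ⊓ AP.Gh := hk
      have hkKL : k ∈ KL := hk'.1
      have hkGh : k ∈ AP.Gh := hk'.2
      have hk2 : k ∈ (↑(KL ⊓ (LD.L ⊓ D.Up)) * ↑(KL ⊓ (LD.L ⊓ D.Um)) *
          ↑(KL ⊓ (D.N ⊓ LD.L)) : Set G) := by
        rw [← hL2]; exact hkKL
      obtain ⟨w, hw, n, hn, hkeq⟩ := Set.mem_mul.1 hk2
      obtain ⟨up, hup, um, hum, hweq⟩ := Set.mem_mul.1 hw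
      obtain ⟨a1, b1, ha1K, ha1Gh, ha1U, hb1K, hb1L, hb1U, hupe⟩ := decP up hup
      obtain ⟨a2, b2, ha2K, ha2Gh, ha2U, hb2K, hb2L, hb2U, hume⟩ := decM um hum
      have hn' : n ∈ KL ⊓ (D.N ⊓ LD.L) := hn
      have hnK : n ∈ KL := hn'.1
      have hnN : n ∈ D.N := hn'.2.1
      have hnL : n ∈ LD.L := hn'.2.2
      have hcba : b1 * a2 = a2 * b1 := (hcomm' a2 (Or.inr ha2U) b1 (Or.inl hb1U)).symm
      have hkeq2 : k = (a1 * a2) * ((b1 * b2) * n) := by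
        rw [← hkeq, ← hweq, hume, hupe]
        calc (a1 * b1) * (a2 * b2) * n = a1 * (b1 * a2) * b2 * n := by group
          _ = a1 * (a2 * b1) * b2 * n := by rw [hcba]
          _ = (a1 * a2) * ((b1 * b2) * n) := by group
      have haaL : a1 * a2 ∈ LD.L := mul_mem (AP.hGhL ha1Gh) (AP.hGhL ha2Gh)
      have hbbnL : (b1 * b2) * n ∈ LD.L := mul_mem (mul_mem hb1L hb2L) hnL
      have hrest : (b1 * b2) * n = (a1 * a2)⁻¹ * k := by rw [hkeq2]; group
      have hrestGh : (a1 * a2)⁻¹ * k ∈ AP.Gh :=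
        mul_mem (inv_mem (mul_mem ha1Gh ha2Gh)) hkGh
      have hPzero : P b1 hb1L * P b2 hb2L * P n hnL = 1 := by
        rw [← pil_mul b1 b2 hb1L hb2L (mul_mem hb1L hb2L),
          ← pil_mul (b1 * b2) n (mul_mem hb1L hb2L) hnL hbbnL]
        exact (pil_eq _ _ hbbnL (mul_mem (inv_mem haaL) (hKLle hkKL)) hrest).trans
          (pil_ker _ _ hrestGh)
      obtain ⟨e1, e2, e3⟩ := AP.huniq _ _ _ (memUlpIm b1 hb1L hb1U) (memUlmIm b2 hb2L hb2U)
        (memNlIm n hnL hnN) hPzero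
      have hb1e : b1 = 1 := injp b1 hb1L hb1U e1
      have hb2e : b2 = 1 := injm b2 hb2L hb2U e2
      have hnGh : n ∈ AP.Gh := by
        have hne : n = (a1 * a2)⁻¹ * k := by rw [← hrest, hb1e, hb2e]; group
        rw [hne]; exact hrestGh
      refine Set.mem_mul.2 ⟨a1 * a2, Set.mem_mul.2 ⟨a1, ?_, a2, ?_, rfl⟩, n, ?_, ?_⟩
      · exact ⟨⟨ha1K, ha1Gh⟩, ha1U⟩
      · exact ⟨⟨ha2K, ha2Gh⟩, ha2U⟩
      · exact ⟨⟨hnK, hnGh⟩, hnN, hnGh⟩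
      · rw [hkeq2, hb1e, hb2e]; group
    · intro k hk
      obtain ⟨w, hw, n, hn, hkeq⟩ := Set.mem_mul.1 hk
      obtain ⟨p, hp, q, hq, hweq⟩ := Set.mem_mul.1 hw
      have hp' : p ∈ (KL ⊓ AP.Gh) ⊓ genU D.U (AP.PhiH ∩ D.PhiP) := hp
      have hq' : q ∈ (KL ⊓ AP.Gh) ⊓ genU D.U (AP.PhiH ∩ D.PhiM) := hq
      have hn' : n ∈ (KL ⊓ AP.Gh) ⊓ (D.N ⊓ AP.Gh) := hn
      rw [← hkeq, ← hweq]
      exact mul_mem (mul_mem hp'.1 hq'.1) hn'.1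
  · -- ProdBij, positive side
    intro l hl hlA
    constructor
    · intro y1 y2 hyy
      set m := (AP.PhiL' ∩ D.PhiRed ∩ D.PhiP).toList with hmdef
      have hm : ∀ a, a ∈ m ↔ a ∈ AP.PhiL' ∩ D.PhiRed ∩ D.PhiP := fun a => Finset.mem_toList
      have hnodup : (l ++ m).Nodup := List.nodup_append.2
        ⟨hl, Finset.nodup_toList _, fun a ha b hb hab => hdisjP a ((hlA a).1 ha) ((hm a).1 (by rw [hab]; exact hb))⟩
      have hmemF : ∀ a, a ∈ l ++ m ↔ a ∈ LD.PhiJ ∩ D.PhiRed ∩ D.PhiP := fun a => by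
        rw [List.mem_append, hFullP a, hlA, hm]
      obtain ⟨x1, hx1, hc1⟩ := S6aux.prodPad D.U (KL ⊓ AP.Gh) KL inf_le_left l m y1
      obtain ⟨x2, hx2, hc2⟩ := S6aux.prodPad D.U (KL ⊓ AP.Gh) KL inf_le_left l m y2
      obtain ⟨hinj, -⟩ := hLBp (l ++ m) hnodup hmemF
      have hxx : x1 = x2 := hinj ((hx1.trans hyy).trans hx2.symm)
      funext i
      apply Subtype.ext
      calc ((y1 i : G)) = _ := (hc1 i).symm
        _ = _ := by rw [hxx]
        _ = ((y2 i : G)) := hc2 i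
    · apply Set.ext
      intro u
      constructor
      · rintro ⟨y, rfl⟩
        exact ⟨S6aux.prod_tuple_mem (KL ⊓ AP.Gh) y (fun i => (y i).2.1),
          S6aux.prod_tuple_mem _ y (fun i => S6aux.le_genU D.U (hgetP l hlA i).2 (y i).2.2)⟩
      · intro hu
        have hu' : u ∈ (KL ⊓ AP.Gh) ⊓ genU D.U (AP.PhiH ∩ D.PhiP) := hu
        have huKLT : u ∈ KL ⊓ (LD.L ⊓ D.Up) := ⟨hu'.1.1, hUhpLUp hu'.2⟩
        obtain ⟨y, b, hbK, hbU, hprod⟩ := decPlist l hl hlA u huKLT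
        have hpGh : (List.ofFn fun i => ((y i : G))).prod ∈ AP.Gh :=
          S6aux.prod_tuple_mem _ y fun i => AP.hUGh _ (hgetP l hlA i).1 (y i).2.2
        have hbL : b ∈ LD.L := hUlpL hbU
        have hbe : b = 1 := by
          apply injp b hbL hbU
          have he : b = ((List.ofFn fun i => ((y i : G))).prod)⁻¹ * u := by rw [hprod]; group
          exact (pil_eq _ _ hbL (mul_mem (inv_mem (AP.hGhL hpGh)) (hKLle hu'.1.1)) he).trans
            (pil_ker _ _ (mul_mem (inv_mem hpGh) hu'.1.2))
        refine ⟨fun i => ⟨(y i : G),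
          ⟨(y i).2.1, AP.hUGh _ (hgetP l hlA i).1 (y i).2.2⟩, (y i).2.2⟩, ?_⟩
        show (List.ofFn fun i => ((y i : G))).prod = u
        rw [hprod, hbe, mul_one]
  · -- ProdBij, negative side
    intro l hl hlA
    constructor
    · intro y1 y2 hyy
      set m := (AP.PhiL' ∩ D.PhiRed ∩ D.PhiM).toList with hmdef
      have hm : ∀ a, a ∈ m ↔ a ∈ AP.PhiL' ∩ D.PhiRed ∩ D.PhiM := fun a => Finset.mem_toList
      have hnodup : (l ++ m).Nodup := List.nodup_append.2
        ⟨hl, Finset.nodup_toList _, fun a ha b hb hab => hdisjM a ((hlA a).1 ha) ((hm a).1 (by rw [hab]; exact hb))⟩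
      have hmemF : ∀ a, a ∈ l ++ m ↔ a ∈ LD.PhiJ ∩ D.PhiRed ∩ D.PhiM := fun a => by
        rw [List.mem_append, hFullM a, hlA, hm]
      obtain ⟨x1, hx1, hc1⟩ := S6aux.prodPad D.U (KL ⊓ AP.Gh) KL inf_le_left l m y1
      obtain ⟨x2, hx2, hc2⟩ := S6aux.prodPad D.U (KL ⊓ AP.Gh) KL inf_le_left l m y2
      obtain ⟨hinj, -⟩ := hLBm (l ++ m) hnodup hmemF
      have hxx : x1 = x2 := hinj ((hx1.trans hyy).trans hx2.symm)
      funext i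
      apply Subtype.ext
      calc ((y1 i : G)) = _ := (hc1 i).symm
        _ = _ := by rw [hxx]
        _ = ((y2 i : G)) := hc2 i
    · apply Set.ext
      intro u
      constructor
      · rintro ⟨y, rfl⟩
        exact ⟨S6aux.prod_tuple_mem (KL ⊓ AP.Gh) y (fun i => (y i).2.1),
          S6aux.prod_tuple_mem _ y (fun i => S6aux.le_genU D.U (hgetM l hlA i).2 (y i).2.2)⟩
      · intro hu
        have hu' : u ∈ (KL ⊓ AP.Gh) ⊓ genU D.U (AP.PhiH ∩ D.PhiM) := hu
        have huKLT : u ∈ KL ⊓ (LD.L ⊓ D.Um) := ⟨hu'.1.1, hUhmLUm hu'.2⟩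
        obtain ⟨y, b, hbK, hbU, hprod⟩ := decMlist l hl hlA u huKLT
        have hpGh : (List.ofFn fun i => ((y i : G))).prod ∈ AP.Gh :=
          S6aux.prod_tuple_mem _ y fun i => AP.hUGh _ (hgetM l hlA i).1 (y i).2.2
        have hbL : b ∈ LD.L := hUlmL hbU
        have hbe : b = 1 := by
          apply injm b hbL hbU
          have he : b = ((List.ofFn fun i => ((y i : G))).prod)⁻¹ * u := by rw [hprod]; group
          exact (pil_eq _ _ hbL (mul_mem (inv_mem (AP.hGhL hpGh)) (hKLle hu'.1.1)) he).trans
            (pil_ker _ _ (mul_mem (inv_mem hpGh) hu'.1.2))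
        refine ⟨fun i => ⟨(y i : G),
          ⟨(y i).2.1, AP.hUGh _ (hgetM l hlA i).1 (y i).2.2⟩, (y i).2.2⟩, ?_⟩
        show (List.ofFn fun i => ((y i : G))).prod = u
        rw [hprod, hbe, mul_one]
  · -- condition (3.2)
    intro h32
    apply Set.Subset.antisymm
    · intro k hk
      have hk' : k ∈ KL ⊓ AP.Gh := hk
      have hkKL : k ∈ KL := hk'.1
      have hkGh : k ∈ AP.Gh := hk'.2
      have hk2 : k ∈ (↑(KL ⊓ (LD.L ⊓ D.Up)) * ↑(KL ⊓ (LD.L ⊓ D.Um)) *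
          ↑(KL ⊓ (LD.L ⊓ D.Up)) * ↑(KL ⊓ D.Z) : Set G) := by
        rw [← h32]; exact hkKL
      obtain ⟨w2, hw2, z, hz, hkeq⟩ := Set.mem_mul.1 hk2
      obtain ⟨w1, hw1, u3, hu3, hw2eq⟩ := Set.mem_mul.1 hw2
      obtain ⟨u1, hu1, u2, hu2, hw1eq⟩ := Set.mem_mul.1 hw1
      obtain ⟨a1, b1, ha1K, ha1Gh, ha1U, hb1K, hb1L, hb1U, hu1e⟩ := decP u1 hu1
      obtain ⟨a2, b2, ha2K, ha2Gh, ha2U, hb2K, hb2L, hb2U, hu2e⟩ := decM u2 hu2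
      obtain ⟨a3, b3, ha3K, ha3Gh, ha3U, hb3K, hb3L, hb3U, hu3e⟩ := decP u3 hu3
      have hz' : z ∈ KL ⊓ D.Z := hz
      have hzK : z ∈ KL := hz'.1
      have hzZ : z ∈ D.Z := hz'.2
      have hzL : z ∈ LD.L := LD.hZL hzZ
      have c1 : b1 * a2 = a2 * b1 := (hcomm' a2 (Or.inr ha2U) b1 (Or.inl hb1U)).symm
      have c2 : b1 * a3 = a3 * b1 := (hcomm' a3 (Or.inl ha3U) b1 (Or.inl hb1U)).symm
      have c3 : b2 * a3 = a3 * b2 := (hcomm' a3 (Or.inl ha3U) b2 (Or.inr hb2U)).symm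
      have hkeq2 : k = (a1 * a2 * a3) * (b1 * (b2 * (b3 * z))) := by
        rw [← hkeq, ← hw2eq, ← hw1eq, hu1e, hu2e, hu3e]
        calc (a1 * b1) * (a2 * b2) * (a3 * b3) * z
            = a1 * (b1 * a2) * (b2 * a3) * b3 * z := by group
          _ = a1 * (a2 * b1) * (b2 * a3) * b3 * z := by rw [c1]
          _ = a1 * (a2 * b1) * (a3 * b2) * b3 * z := by rw [c3]
          _ = a1 * a2 * (b1 * a3) * b2 * b3 * z := by group
          _ = a1 * a2 * (a3 * b1) * b2 * b3 * z := by rw [c2]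
          _ = (a1 * a2 * a3) * (b1 * (b2 * (b3 * z))) := by group
      have haaaL : a1 * a2 * a3 ∈ LD.L :=
        mul_mem (mul_mem (AP.hGhL ha1Gh) (AP.hGhL ha2Gh)) (AP.hGhL ha3Gh)
      have haaaGh : a1 * a2 * a3 ∈ AP.Gh := mul_mem (mul_mem ha1Gh ha2Gh) ha3Gh
      have hrestGh : (a1 * a2 * a3)⁻¹ * k ∈ AP.Gh := mul_mem (inv_mem haaaGh) hkGh
      have hPzero : P b1 hb1L * P b2 hb2L * P b3 hb3L * P z hzL = 1 := by
        rw [← pil_mul b1 b2 hb1L hb2L (mul_mem hb1L hb2L),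
          ← pil_mul (b1 * b2) b3 (mul_mem hb1L hb2L) hb3L (mul_mem (mul_mem hb1L hb2L) hb3L),
          ← pil_mul (b1 * b2 * b3) z (mul_mem (mul_mem hb1L hb2L) hb3L) hzL
            (mul_mem (mul_mem (mul_mem hb1L hb2L) hb3L) hzL)]
        refine (pil_eq _ _ _ (mul_mem (inv_mem haaaL) (hKLle hkKL)) ?_).trans
          (pil_ker _ _ hrestGh)
        rw [hkeq2]; group
      obtain ⟨e2, ez, e31⟩ := uniq3 _ _ _ _ (memUlpIm b1 hb1L hb1U) (memUlmIm b2 hb2L hb2U)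
        (memUlpIm b3 hb3L hb3U) (memZlIm z hzL hzZ) hPzero
      have hb2e : b2 = 1 := injm b2 hb2L hb2U e2
      have hzGh : z ∈ AP.Gh := AP.hker_Z ⟨z, hzL⟩ hzZ ez
      have hb31 : b3 * b1 = 1 := by
        refine injp (b3 * b1) (mul_mem hb3L hb1L) (mul_mem hb3U hb1U) ?_
        rw [pil_mul b3 b1 hb3L hb1L (mul_mem hb3L hb1L)]
        exact e31
      have hb3e : b3 = b1⁻¹ := eq_inv_of_mul_eq_one_left hb31
      refine Set.mem_mul.2 ⟨a1 * a2 * a3, Set.mem_mul.2 ⟨a1 * a2,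
        Set.mem_mul.2 ⟨a1, ?_, a2, ?_, rfl⟩, a3, ?_, rfl⟩, z, ?_, ?_⟩
      · exact ⟨⟨ha1K, ha1Gh⟩, ha1U⟩
      · exact ⟨⟨ha2K, ha2Gh⟩, ha2U⟩
      · exact ⟨⟨ha3K, ha3Gh⟩, ha3U⟩
      · exact ⟨⟨hzK, hzGh⟩, hzZ, hzGh⟩
      · rw [hkeq2, hb2e, hb3e]; group
    · intro k hk
      obtain ⟨w2, hw2, z, hz, hkeq⟩ := Set.mem_mul.1 hk
      obtain ⟨w1, hw1, u3, hu3, hw2eq⟩ := Set.mem_mul.1 hw2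
      obtain ⟨u1, hu1, u2, hu2, hw1eq⟩ := Set.mem_mul.1 hw1
      have h1 : u1 ∈ (KL ⊓ AP.Gh) ⊓ genU D.U (AP.PhiH ∩ D.PhiP) := hu1
      have h2 : u2 ∈ (KL ⊓ AP.Gh) ⊓ genU D.U (AP.PhiH ∩ D.PhiM) := hu2
      have h3 : u3 ∈ (KL ⊓ AP.Gh) ⊓ genU D.U (AP.PhiH ∩ D.PhiP) := hu3
      have h4 : z ∈ (KL ⊓ AP.Gh) ⊓ (D.Z ⊓ AP.Gh) := hz
      rw [← hkeq, ← hw2eq, ← hw1eq]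
      exact mul_mem (mul_mem (mul_mem h1.1 h2.1) h3.1) h4.1
end

section
/- Assume the root-subgroup data with the full-uniqueness Bruhat decomposition: G = U⁻NU⁺ and whenever u₁⁻n₁u₁⁺ = u₂⁻n₂u₂⁺ with u_i^± ∈ U^± and n_i ∈ N, then u₁⁻ = u₂⁻, n₁ = n₂ and u₁⁺ = u₂⁺. Let U ≤ G be a subgroup such that U = (U∩U⁻)(U∩U⁺)(U∩N) = (U∩U⁺)(U∩U⁻)(U∩N) and, for every linear ordering of Φ⁺_red (resp. Φ⁻_red), the multiplication map ∏_α (U∩U_α) → U∩U⁺ (resp. → U∩U⁻) is bijective. Let X ≤ Z be a subgroup normalizing U. Then K := UX = XU is a subgroup of G satisfying condition (3.1), and moreover K ∩ U_α = U ∩ U_α for every α ∈ Φ_red, K ∩ U⁺ = U ∩ U⁺, K ∩ U⁻ = U ∩ U⁻, and K ∩ N = (U∩N)X. (Abstract form of the paper's Corollary that X_{x,f} satisfies condition (3.1).) -/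
open Pointwise

section Aux

variable {G : Type*} [Group G] {ι : Type*}

/-- Generic multiplication map out of a dependent product of subgroups. -/
def mulMapAux {n : ℕ} (f : Fin n → Subgroup G) : (∀ i, ↥(f i)) → G :=
  fun x => (List.ofFn fun i => ((x i : G))).prod

theorem prodBij_iff (U : ι → Subgroup G) (K T : Subgroup G) (l : List ι) :
    ProdBij U K T l ↔
      (Function.Injective (mulMapAux fun i : Fin l.length => K ⊓ U (l.get i)) ∧
        Set.range (mulMapAux fun i : Fin l.length => K ⊓ U (l.get i))
          = ((K ⊓ T : Subgroup G) : Set G)) := Iff.rfl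

theorem prodBij_congr (U : ι → Subgroup G) {K K' T T' : Subgroup G} (l : List ι)
    (h1 : ∀ i : Fin l.length, K ⊓ U (l.get i) = K' ⊓ U (l.get i))
    (h2 : K ⊓ T = K' ⊓ T') (h : ProdBij U K' T' l) : ProdBij U K T l := by
  have hf : (fun i : Fin l.length => K ⊓ U (l.get i))
      = fun i : Fin l.length => K' ⊓ U (l.get i) := funext h1
  have key : ∀ f g : Fin l.length → Subgroup G, f = g →
      (Function.Injective (mulMapAux g) ∧
        Set.range (mulMapAux g) = ((K' ⊓ T' : Subgroup G) : Set G)) →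
      (Function.Injective (mulMapAux f) ∧
        Set.range (mulMapAux f) = ((K' ⊓ T' : Subgroup G) : Set G)) := by
    rintro f g rfl h; exact h
  rw [prodBij_iff] at h ⊢
  rw [h2]
  exact key _ _ hf h

end Aux

/-- Assume the root-subgroup data with the full-uniqueness Bruhat
decomposition `G = U⁻NU⁺`. Let `U ≤ G` satisfy condition (3.1) and let `X ≤ Z`
normalize `U`. Then `K := UX = XU` is a subgroup of `G` satisfying condition (3.1),
and moreover `K ∩ U_α = U ∩ U_α` for all `α ∈ Φ_red`, `K ∩ U⁺ = U ∩ U⁺`,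
`K ∩ U⁻ = U ∩ U⁻`, and `K ∩ N = (U ∩ N)X`. -/
theorem stmt8 {G : Type*} [Group G] {ι : Type*} [DecidableEq ι]
    (D : RootData G ι)
    (bruhat_cover : (↑D.Um * ↑D.N * ↑D.Up : Set G) = Set.univ)
    (bruhat_uniq : ∀ u₁ n₁ v₁ u₂ n₂ v₂ : G, u₁ ∈ D.Um → n₁ ∈ D.N → v₁ ∈ D.Up →
      u₂ ∈ D.Um → n₂ ∈ D.N → v₂ ∈ D.Up → u₁ * n₁ * v₁ = u₂ * n₂ * v₂ →
      u₁ = u₂ ∧ n₁ = n₂ ∧ v₁ = v₂)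
    (Usub : Subgroup G) (hU31 : D.cond31 Usub)
    (X : Subgroup G) (hXZ : X ≤ D.Z)
    (hXnorm : ∀ x ∈ X, ∀ u ∈ Usub, x * u * x⁻¹ ∈ Usub) :
    ((Usub ⊔ X : Subgroup G) : Set G) = (Usub : Set G) * (X : Set G) ∧
    ((Usub ⊔ X : Subgroup G) : Set G) = (X : Set G) * (Usub : Set G) ∧
    D.cond31 (Usub ⊔ X) ∧
    (∀ α ∈ D.PhiRed, (Usub ⊔ X) ⊓ D.U α = Usub ⊓ D.U α) ∧
    (Usub ⊔ X) ⊓ D.Up = Usub ⊓ D.Up ∧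
    (Usub ⊔ X) ⊓ D.Um = Usub ⊓ D.Um ∧
    (((Usub ⊔ X) ⊓ D.N : Subgroup G) : Set G) =
      ((Usub ⊓ D.N : Subgroup G) : Set G) * (X : Set G) := by
  classical
  obtain ⟨hU1, hU2, hU3, hU4⟩ := hU31
  set K := Usub ⊔ X with hKdef
  have hXN : X ≤ D.N := le_trans hXZ D.hZN
  -- conjugation lemmas
  have hconj : ∀ x ∈ X, ∀ u ∈ Usub, ∃ u' ∈ Usub, x * u = u' * x := by
    intro x hx u hu
    exact ⟨x * u * x⁻¹, hXnorm x hx u hu, by group⟩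
  -- the product set Usub * X is a subgroup
  obtain ⟨S, hSeq⟩ : ∃ S : Subgroup G, (S : Set G) = (Usub : Set G) * X := by
    refine ⟨{ carrier := (Usub : Set G) * X
              one_mem' := ⟨1, one_mem _, 1, one_mem _, one_mul 1⟩
              mul_mem' := ?_
              inv_mem' := ?_ }, rfl⟩
    · rintro a b ⟨u1, hu1, x1, hx1, rfl⟩ ⟨u2, hu2, x2, hx2, rfl⟩
      obtain ⟨u', hu', he⟩ := hconj x1 hx1 u2 hu2
      refine ⟨u1 * u', mul_mem hu1 hu', x1 * x2, mul_mem hx1 hx2, ?_⟩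
      show u1 * u' * (x1 * x2) = u1 * x1 * (u2 * x2)
      have h0 : u1 * u' * (x1 * x2) = u1 * (u' * x1) * x2 := by group
      rw [h0, ← he]; group
    · rintro a ⟨u, hu, x, hx, rfl⟩
      obtain ⟨u', hu', he⟩ := hconj x⁻¹ (inv_mem hx) u⁻¹ (inv_mem hu)
      refine ⟨u', hu', x⁻¹, inv_mem hx, ?_⟩
      show u' * x⁻¹ = (u * x)⁻¹
      rw [← he]; group
  have hK : (K : Set G) = (Usub : Set G) * X := by
    apply subset_antisymm
    · have hle : K ≤ S := by
        refine sup_le (fun g hg => ?_) (fun g hg => ?_)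
        · have : g ∈ (S : Set G) := hSeq ▸ ⟨g, hg, 1, one_mem _, mul_one g⟩
          exact this
        · have : g ∈ (S : Set G) := hSeq ▸ ⟨1, one_mem _, g, hg, one_mul g⟩
          exact this
      intro g hg
      exact hSeq ▸ (hle hg)
    · rintro g ⟨u, hu, x, hx, rfl⟩
      exact mul_mem (Subgroup.mem_sup_left hu) (Subgroup.mem_sup_right hx)
  have hXUeq : (X : Set G) * Usub = (Usub : Set G) * X := by
    apply subset_antisymm
    · rintro g ⟨x, hx, u, hu, rfl⟩
      obtain ⟨u', hu', he⟩ := hconj x hx u hu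
      exact ⟨u', hu', x, hx, he.symm⟩
    · rintro g ⟨u, hu, x, hx, rfl⟩
      obtain ⟨u', hu', he⟩ := hconj x⁻¹ (inv_mem hx) u hu
      refine ⟨x, hx, x⁻¹ * u * x, ?_, by show x * (x⁻¹ * u * x) = u * x; group⟩
      have : x⁻¹ * u * x = u' * x⁻¹ * x := by rw [← he]
      rw [this]; simpa using hu'
  -- decompositions of elements of Usub
  have decomp1 : ∀ u ∈ Usub, ∃ a ∈ Usub ⊓ D.Um, ∃ b ∈ Usub ⊓ D.Up,
      ∃ n ∈ Usub ⊓ D.N, u = a * b * n := by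
    intro u hu
    have hu' : u ∈ (↑(Usub ⊓ D.Um) * ↑(Usub ⊓ D.Up) * ↑(Usub ⊓ D.N) : Set G) := by
      rw [← hU1]; exact hu
    obtain ⟨y, hy, n, hn, rfl⟩ := hu'
    obtain ⟨a, ha, b, hb, rfl⟩ := hy
    exact ⟨a, ha, b, hb, n, hn, rfl⟩
  have decomp2 : ∀ u ∈ Usub, ∃ b ∈ Usub ⊓ D.Up, ∃ a ∈ Usub ⊓ D.Um,
      ∃ n ∈ Usub ⊓ D.N, u = b * a * n := by
    intro u hu
    have hu' : u ∈ (↑(Usub ⊓ D.Up) * ↑(Usub ⊓ D.Um) * ↑(Usub ⊓ D.N) : Set G) := by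
      rw [← hU2]; exact hu
    obtain ⟨y, hy, n, hn, rfl⟩ := hu'
    obtain ⟨b, hb, a, ha, rfl⟩ := hy
    exact ⟨b, hb, a, ha, n, hn, rfl⟩
  have decompN1 : ∀ u ∈ Usub, ∃ n ∈ Usub ⊓ D.N, ∃ a ∈ Usub ⊓ D.Um,
      ∃ b ∈ Usub ⊓ D.Up, u = n * a * b := by
    intro u hu
    obtain ⟨b, hb, a, ha, n, hn, he⟩ := decomp2 u⁻¹ (inv_mem hu)
    refine ⟨n⁻¹, inv_mem hn, a⁻¹, inv_mem ha, b⁻¹, inv_mem hb, ?_⟩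
    have : u = (b * a * n)⁻¹ := by rw [← he]; group
    rw [this]; group
  have decompN2 : ∀ u ∈ Usub, ∃ n ∈ Usub ⊓ D.N, ∃ b ∈ Usub ⊓ D.Up,
      ∃ a ∈ Usub ⊓ D.Um, u = n * b * a := by
    intro u hu
    obtain ⟨a, ha, b, hb, n, hn, he⟩ := decomp1 u⁻¹ (inv_mem hu)
    refine ⟨n⁻¹, inv_mem hn, b⁻¹, inv_mem hb, a⁻¹, inv_mem ha, ?_⟩
    have : u = (a * b * n)⁻¹ := by rw [← he]; group
    rw [this]; group
  -- key intersection lemmas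
  have keyUp : ∀ g ∈ K, g ∈ D.Up → g ∈ Usub := by
    intro g hgK hgUp
    have hg1 : g ∈ ((Usub : Set G) * X) := hK ▸ hgK
    have hg2 : g ∈ ((X : Set G) * Usub) := by rw [hXUeq]; exact hg1
    obtain ⟨x, hx, u, hu, he⟩ := hg2
    have he' : x * u = g := he
    obtain ⟨n, hn, a, ha, b, hb, he2⟩ := decompN1 u hu
    have heq : (1 : G) * (x * n)⁻¹ * g = a * 1 * b := by
      rw [← he', he2]; group
    obtain ⟨h1, h2, h3⟩ := bruhat_uniq 1 (x * n)⁻¹ g a 1 b (one_mem _)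
      (inv_mem (mul_mem (hXN hx) hn.2)) hgUp ha.2 (one_mem _) hb.2 heq
    have hx' : x ∈ Usub := by
      have hxn1 : x * n = 1 := by rw [← inv_inv (x * n), h2, inv_one]
      have hxn : x = n⁻¹ := eq_inv_of_mul_eq_one_left hxn1
      rw [hxn]; exact inv_mem hn.1
    rw [← he']; exact mul_mem hx' hu
  have keyUm : ∀ g ∈ K, g ∈ D.Um → g ∈ Usub := by
    intro g hgK hgUm
    have hg1 : g ∈ ((Usub : Set G) * X) := hK ▸ hgK
    have hg2 : g ∈ ((X : Set G) * Usub) := by rw [hXUeq]; exact hg1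
    obtain ⟨x, hx, u, hu, he⟩ := hg2
    have he' : x * u = g := he
    obtain ⟨n, hn, b, hb, a, ha, he2⟩ := decompN2 u hu
    have heq : g⁻¹ * (x * n) * 1 = a⁻¹ * 1 * b⁻¹ := by
      rw [← he', he2]; group
    obtain ⟨h1, h2, h3⟩ := bruhat_uniq g⁻¹ (x * n) 1 a⁻¹ 1 b⁻¹ (inv_mem hgUm)
      (mul_mem (hXN hx) hn.2) (one_mem _) (inv_mem ha.2) (one_mem _)
      (inv_mem hb.2) heq
    have hx' : x ∈ Usub := by
      have hxn : x = n⁻¹ := eq_inv_of_mul_eq_one_left h2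
      rw [hxn]; exact inv_mem hn.1
    rw [← he']; exact mul_mem hx' hu
  have keyN : ∀ g ∈ K, g ∈ D.N →
      g ∈ ((Usub ⊓ D.N : Subgroup G) : Set G) * X := by
    intro g hgK hgN
    have hg1 : g ∈ ((Usub : Set G) * X) := hK ▸ hgK
    obtain ⟨u, hu, x, hx, he⟩ := hg1
    have he' : u * x = g := he
    obtain ⟨a, ha, b, hb, n, hn, he2⟩ := decomp1 u hu
    have heq : a * 1 * b = 1 * (g * x⁻¹ * n⁻¹) * 1 := by
      rw [← he', he2]; group
    obtain ⟨h1, h2, h3⟩ := bruhat_uniq a 1 b 1 (g * x⁻¹ * n⁻¹) 1 ha.2 (one_mem _)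
      hb.2 (one_mem _) (mul_mem (mul_mem hgN (inv_mem (hXN hx))) (inv_mem hn.2))
      (one_mem _) heq
    refine ⟨n, hn, x, hx, ?_⟩
    show n * x = g
    rw [← he', he2, h1, h3]; group
  -- intersection equalities
  have hUpEq : K ⊓ D.Up = Usub ⊓ D.Up := by
    refine le_antisymm (fun g hg => ⟨keyUp g hg.1 hg.2, hg.2⟩)
      (inf_le_inf_right _ le_sup_left)
  have hUmEq : K ⊓ D.Um = Usub ⊓ D.Um := by
    refine le_antisymm (fun g hg => ⟨keyUm g hg.1 hg.2, hg.2⟩)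
      (inf_le_inf_right _ le_sup_left)
  have hNEq : ((K ⊓ D.N : Subgroup G) : Set G)
      = ((Usub ⊓ D.N : Subgroup G) : Set G) * X := by
    apply subset_antisymm
    · intro g hg
      exact keyN g hg.1 hg.2
    · rintro g ⟨n, hn, x, hx, rfl⟩
      exact ⟨mul_mem (Subgroup.mem_sup_left hn.1) (Subgroup.mem_sup_right hx),
        mul_mem hn.2 (hXN hx)⟩
  have hUalpha : ∀ α ∈ D.PhiRed, K ⊓ D.U α = Usub ⊓ D.U α := by
    intro α hα
    have hΦ : α ∈ D.PhiP ∪ D.PhiM := by rw [D.union_eq]; exact D.red_sub hα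
    rcases Finset.mem_union.mp hΦ with hαP | hαM
    · have hle : D.U α ≤ D.Up := le_iSup₂ (f := fun β (_ : β ∈ D.PhiP) => D.U β) α hαP
      have h' : D.Up ⊓ D.U α = D.U α := inf_eq_right.mpr hle
      rw [← h', ← inf_assoc, hUpEq, inf_assoc]
    · have hle : D.U α ≤ D.Um := le_iSup₂ (f := fun β (_ : β ∈ D.PhiM) => D.U β) α hαM
      have h' : D.Um ⊓ D.U α = D.U α := inf_eq_right.mpr hle
      rw [← h', ← inf_assoc, hUmEq, inf_assoc]
  -- condition (3.1) for K
  have hC1 : (K : Set G) = ↑(K ⊓ D.Um) * ↑(K ⊓ D.Up) * ↑(K ⊓ D.N) := by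
    rw [hUmEq, hUpEq, hNEq, hK, hU1, mul_assoc]
  have hC2 : (K : Set G) = ↑(K ⊓ D.Up) * ↑(K ⊓ D.Um) * ↑(K ⊓ D.N) := by
    rw [hUmEq, hUpEq, hNEq, hK, hU2, mul_assoc]
  have hC3 : ∀ l : List ι, l.Nodup → (∀ a, a ∈ l ↔ a ∈ D.PhiRed ∩ D.PhiP) →
      ProdBij D.U K D.Up l := by
    intro l hnd hmem
    refine prodBij_congr D.U l (fun i => ?_) hUpEq (hU3 l hnd hmem)
    exact hUalpha _ (Finset.mem_inter.mp ((hmem _).mp (l.get_mem i))).1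
  have hC4 : ∀ l : List ι, l.Nodup → (∀ a, a ∈ l ↔ a ∈ D.PhiRed ∩ D.PhiM) →
      ProdBij D.U K D.Um l := by
    intro l hnd hmem
    refine prodBij_congr D.U l (fun i => ?_) hUmEq (hU4 l hnd hmem)
    exact hUalpha _ (Finset.mem_inter.mp ((hmem _).mp (l.get_mem i))).1
  exact ⟨hK, hK.trans hXUeq.symm, ⟨hC1, hC2, hC3, hC4⟩, hUalpha, hUpEq, hUmEq, hNEq⟩
end
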